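/- arXiv:2309.11631 — 3 statements merged into one kernel-verified Lean document; each statement's English description precedes it below -/
import Mathlib

section
/- If I is an ideal of R generated by homogeneous elements of a single degree d and ht I > 0, then reg I^{n-1}/I^n ≥ dn − 1 for all n ≥ 1. -/
/-!
Common setup.

We encode a finitely generated standard graded algebra `R` over a field `k` by the data
`StdGraded k R`: the grading `deg : ℤ → Submodule k R` (an internal direct sum, vanishing
in negative degrees, with `deg 0 = k·1` and `deg (n+1) = deg 1 * deg n`), together with a
finite family `gen` of degree-one elements spanning `deg 1` over `k` (so `R` is generated
in degree one by finitely many elements).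

For homogeneous ideals `B ⊆ A` of `R`, the Castelnuovo–Mumford regularity of the graded
module `A/B` is formalized through the classical characterization
`reg M = max { j - i : β_{i,j}(M) ≠ 0 }`, where `β_{i,j}(M) = dim_k (Tor_i^S(M, k))_j` is
the graded Betti number over a polynomial ring `S = k[X_1, …, X_r]` mapping onto `R` via
the chosen degree-one generators.  These Betti numbers are computed honestly as the
homology of the graded Koszul complex `K(x_1, …, x_r; M)` on the degree-one generators:
`TorNonzero G A B i j` says that this Koszul homology of `A/B` is nonzero in homological
degree `i` and internal degree `j`.  This agrees with the local cohomology definition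
`reg M = max { a(H_m^i(M)) + i : i ≥ 0 }` for finitely generated graded modules over a
standard graded algebra.  Similarly, by a theorem of Trung, the partial regularity
`reg_t M = max { a(H_m^i(M)) + i : i ≤ t }` equals
`max { j - i : β_{i,j}(M) ≠ 0, i ≥ r - t }`, which is taken as the definition
`preg` below.
-/

structure StdGraded (k R : Type) [Field k] [CommRing R] [Algebra k R] where
  deg : ℤ → Submodule k R
  internal : DirectSum.IsInternal deg
  bot_of_neg : ∀ i : ℤ, i < 0 → deg i = ⊥
  deg_zero : deg 0 = 1
  standard : ∀ n : ℕ, deg ((n : ℤ) + 1) = deg 1 * deg (n : ℤ)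
  ngens : ℕ
  gen : Fin ngens → R
  gen_mem : ∀ i, gen i ∈ deg 1
  gen_span : Submodule.span k (Set.range gen) = deg 1

variable {k R : Type} [Field k] [CommRing R] [Algebra k R]

/-- The Koszul differential on the Koszul complex (on the degree-one generators of `R`)
with coefficients in `R`; a function `Finset (Fin r) → R` records the coordinates of an
element of an exterior power component with respect to the basis `e_s`. -/
noncomputable def kosD (G : StdGraded k R) (f : Finset (Fin G.ngens) → R) :
    Finset (Fin G.ngens) → R := fun t =>
  ∑ j ∈ tᶜ, (-1 : R) ^ ((t.filter fun l => l < j).card) * G.gen j * f (insert j t)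

/-- `TorNonzero G A B i j` : the internal degree `j` part of the `i`-th homology of the
Koszul complex of the degree-one generators with coefficients in the graded module `A/B`
is nonzero; equivalently, the graded Betti number `β_{i,j}(A/B)` over a polynomial ring
mapping onto `R` is nonzero. -/
def TorNonzero (G : StdGraded k R) (A B : Ideal R) (i : ℕ) (j : ℤ) : Prop :=
  ∃ f : Finset (Fin G.ngens) → R,
    (∀ s, if s.card = i then f s ∈ A ∧ f s ∈ G.deg (j - (i : ℤ)) else f s = 0) ∧
    (∀ t, kosD G f t ∈ B) ∧
    ¬ ∃ g : Finset (Fin G.ngens) → R,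
        (∀ s, if s.card = i + 1 then g s ∈ A ∧ g s ∈ G.deg (j - (i : ℤ) - 1) else g s = 0) ∧
        (∀ s, f s - kosD G g s ∈ B)

/-- The Castelnuovo–Mumford regularity `reg (A/B) = max { a(H_m^i(A/B)) + i : i ≥ 0 }` of
the graded `R`-module `A/B`, via the graded Betti number characterization
`reg = max { j - i : β_{i,j} ≠ 0 }`. -/
noncomputable def reg (G : StdGraded k R) (A B : Ideal R) : ℤ :=
  sSup {e : ℤ | ∃ (i : ℕ) (j : ℤ), e = j - (i : ℤ) ∧ TorNonzero G A B i j}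

/-- The partial regularity `reg_t (A/B) = max { a(H_m^i(A/B)) + i : 0 ≤ i ≤ t }`, via
Trung's characterization `reg_t M = max { j - i : β_{i,j}(M) ≠ 0, i ≥ r - t }`. -/
noncomputable def preg (G : StdGraded k R) (t : ℕ) (A B : Ideal R) : ℤ :=
  sSup {e : ℤ | ∃ (i : ℕ) (j : ℤ), G.ngens - t ≤ i ∧ e = j - (i : ℤ) ∧ TorNonzero G A B i j}

/-- `I` is a homogeneous (graded) ideal. -/
def IsHomogeneousIdeal (G : StdGraded k R) (I : Ideal R) : Prop :=
  ∃ T : Set R, (∀ s ∈ T, ∃ j : ℤ, s ∈ G.deg j) ∧ I = Ideal.span T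

/-- `I` is generated by forms of the single degree `d` (equigenerated). -/
def GeneratedInDegree (G : StdGraded k R) (d : ℕ) (I : Ideal R) : Prop :=
  ∃ T : Set R, T ⊆ (G.deg (d : ℤ) : Set R) ∧ I = Ideal.span T

/-- The irrelevant maximal graded ideal `m = ⊕_{i > 0} R_i` of the standard graded
algebra `R` (generated by the degree-one part). -/
def irrel (G : StdGraded k R) : Ideal R := Ideal.span (G.deg 1 : Set R)

/-- The saturation `Ĩ = ∪_t (I : m^t)` of an ideal `I`. -/
noncomputable def satIdeal (G : StdGraded k R) (I : Ideal R) : Ideal R :=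
  ⨆ t : ℕ, Submodule.colon I (((irrel G) ^ t : Ideal R) : Set R)

open Classical in
/-- The supremum in `WithBot ℤ` of a set of integers: `⊥` (i.e. `-∞`) if the set is
empty.  (Junk value if the set is unbounded above.) -/
noncomputable def zsupBot (s : Set ℤ) : WithBot ℤ :=
  if s.Nonempty then ((sSup s : ℤ) : WithBot ℤ) else ⊥

/-- The saturation degree `sdeg I = a(Ĩ/I) + 1 = a(H_m^0(R/I)) + 1`: the least degree
from which `Ĩ` and `I` agree, `⊥` (i.e. `-∞`) if `Ĩ = I`. -/
noncomputable def sdegB (G : StdGraded k R) (I : Ideal R) : WithBot ℤ :=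
  zsupBot {a : ℤ | ∃ j : ℤ, a = j + 1 ∧ ∃ y : R, y ∈ G.deg j ∧ y ∈ satIdeal G I ∧ y ∉ I}

namespace StdGraded

open Pointwise

variable (G : StdGraded k R)

/-- Degree-one times degree-`c` lands in degree `1 + c`, for any `c : ℤ`. -/
theorem deg_one_mul (c : ℤ) : G.deg 1 * G.deg c ≤ G.deg (1 + c) := by
  rcases lt_or_ge c 0 with hc | hc
  · rw [G.bot_of_neg c hc, Submodule.mul_bot]
    exact bot_le
  · obtain ⟨p, rfl⟩ := Int.eq_ofNat_of_zero_le hc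
    rw [show ((1 : ℤ) + p) = (p : ℤ) + 1 by ring, G.standard p]

/-- `deg n = (deg 1)^n` helper: multiplication adds degrees. -/
theorem mul_mem_deg : ∀ {a b : ℤ} {x y : R}, x ∈ G.deg a → y ∈ G.deg b →
    x * y ∈ G.deg (a + b) := by
  have key : ∀ (p : ℕ) {b : ℤ} (x y : R), x ∈ G.deg (p : ℤ) → y ∈ G.deg b →
      x * y ∈ G.deg ((p : ℤ) + b) := by
    intro p
    induction p with
    | zero =>
      intro b x y hx hy
      rw [show ((0 : ℕ) : ℤ) = 0 by norm_num, G.deg_zero] at hx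
      rw [Submodule.mem_one] at hx
      obtain ⟨c, rfl⟩ := hx
      have : (algebraMap k R) c * y = c • y := by
        rw [Algebra.smul_def]
      rw [this, show ((0:ℕ):ℤ) + b = b by ring]
      exact (G.deg b).smul_mem c hy
    | succ p ih =>
      intro b x y hx hy
      rw [show ((p+1 : ℕ) : ℤ) = (p : ℤ) + 1 by push_cast; ring, G.standard p] at hx
      refine Submodule.mul_induction_on (C := fun x => x * y ∈ G.deg ((p:ℤ) + 1 + b)) hx ?_ ?_
      · intro s hs t ht
        have h1 : t * y ∈ G.deg ((p : ℤ) + b) := ih t y ht hy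
        have h2 := G.deg_one_mul ((p : ℤ) + b) (Submodule.mul_mem_mul hs h1)
        have h3 : s * t * y = s * (t * y) := by ring
        rw [h3]
        convert h2 using 2
        push_cast; ring
      · intro x' y' hx' hy'
        have h3 : (x' + y') * y = x' * y + y' * y := by ring
        rw [h3]
        exact (G.deg _).add_mem hx' hy'
  intro a b x y hx hy
  rcases lt_or_ge a 0 with ha | ha
  · rw [G.bot_of_neg a ha] at hx
    simp only [Submodule.mem_bot] at hx
    subst hx
    simp only [zero_mul]
    exact (G.deg _).zero_mem
  · obtain ⟨p, rfl⟩ := Int.eq_ofNat_of_zero_le ha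
    exact key p x y hx hy

/-- The sum of all degrees is everything. -/
theorem top_decomp : (⨆ j : ℤ, G.deg j) = ⊤ := G.internal.submodule_iSup_eq_top

/-- The k-submodule of elements of degree at least `m`. -/
noncomputable def Rge (m : ℤ) : Submodule k R := ⨆ j : {j : ℤ // m ≤ j}, G.deg j.val

theorem mem_Rge {m j : ℤ} {x : R} (h : x ∈ G.deg j) (hj : m ≤ j) : x ∈ G.Rge m :=
  Submodule.mem_iSup_of_mem (⟨j, hj⟩ : {j : ℤ // m ≤ j}) h

theorem Rge_induction {m : ℤ} {x : R} (hx : x ∈ G.Rge m) {C : R → Prop}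
    (mem : ∀ j, m ≤ j → ∀ y ∈ G.deg j, C y) (zero : C 0)
    (add : ∀ y z, C y → C z → C (y + z)) : C x := by
  have hx' : x ∈ ⨆ j : {j : ℤ // m ≤ j}, G.deg j.val := hx
  exact Submodule.iSup_induction (motive := C) (fun j : {j : ℤ // m ≤ j} => G.deg j.val) hx'
    (fun j y hy => mem j.val j.property y hy) zero add

/-- degree-`a` times `Rge m` lands in `Rge (a+m)`. -/
theorem deg_mul_Rge {a m : ℤ} {x y : R} (hx : x ∈ G.deg a) (hy : y ∈ G.Rge m) :
    x * y ∈ G.Rge (a + m) := by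
  rcases lt_or_ge a 0 with ha | ha
  · rw [G.bot_of_neg a ha] at hx
    simp only [Submodule.mem_bot] at hx; subst hx
    simpa using (G.Rge (a+m)).zero_mem
  · refine G.Rge_induction hy (C := fun y => x * y ∈ G.Rge (a + m)) ?_ ?_ ?_
    · intro j hj z hz
      exact G.mem_Rge (G.mul_mem_deg hx hz) (by omega)
    · simpa using (G.Rge (a+m)).zero_mem
    · intro y z hy hz
      rw [mul_add]
      exact (G.Rge _).add_mem hy hz

/-- `Rge m` is an ideal: closed under multiplication by arbitrary ring elements. -/
theorem mul_mem_Rge {m : ℤ} (r : R) {x : R} (hx : x ∈ G.Rge m) : r * x ∈ G.Rge m := by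
  have hr : r ∈ ⨆ j : ℤ, G.deg j := by rw [G.top_decomp]; trivial
  refine Submodule.iSup_induction _ (motive := fun r => r * x ∈ G.Rge m) hr ?_ ?_ ?_
  · intro a s hs
    rcases lt_or_ge a 0 with ha | ha
    · rw [G.bot_of_neg a ha] at hs
      simp only [Submodule.mem_bot] at hs; subst hs
      simpa using (G.Rge m).zero_mem
    · have h2 := G.deg_mul_Rge hs hx
      refine G.Rge_induction h2 (C := fun z => z ∈ G.Rge m) ?_ ((G.Rge m).zero_mem)
        (fun y z hy hz => (G.Rge m).add_mem hy hz)
      intro j hj z hz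
      exact G.mem_Rge hz (by omega)
  · simpa using (G.Rge m).zero_mem
  · intro y z hy hz
    rw [add_mul]
    exact (G.Rge m).add_mem hy hz

theorem set_pow_subset_deg {T : Set R} {d : ℕ} (hT : T ⊆ (G.deg (d : ℤ) : Set R)) :
    ∀ m : ℕ, ∀ x ∈ T ^ m, x ∈ G.deg ((d : ℤ) * m) := by
  intro m
  induction m with
  | zero =>
    intro x hx
    rw [pow_zero] at hx
    rw [Set.mem_one] at hx
    subst hx
    rw [show ((d : ℤ) * (0 : ℕ)) = 0 by push_cast; ring, G.deg_zero]
    exact Submodule.one_le.mp le_rfl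
  | succ m ih =>
    intro x hx
    rw [pow_succ] at hx
    rw [Set.mem_mul] at hx
    obtain ⟨y, hy, t, ht, rfl⟩ := hx
    have h1 := G.mul_mem_deg (ih y hy) (hT ht)
    rw [show ((d:ℤ) * ((m+1 : ℕ) : ℤ)) = (d:ℤ) * m + d by push_cast; ring]
    exact h1

theorem span_pow_eq {T : Set R} (m : ℕ) : Ideal.span T ^ m = Ideal.span (T ^ m) :=
  Submodule.span_pow T m

theorem pow_le_Rge {T : Set R} {d : ℕ} (hT : T ⊆ (G.deg (d : ℤ) : Set R)) (m : ℕ)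
    {x : R} (hx : x ∈ Ideal.span T ^ m) : x ∈ G.Rge ((d : ℤ) * m) := by
  rw [span_pow_eq] at hx
  refine Submodule.span_induction ?_ ?_ ?_ ?_ hx
  · intro y hy
    exact G.mem_Rge (G.set_pow_subset_deg hT m y hy) le_rfl
  · exact (G.Rge _).zero_mem
  · intro y z _ _ hy hz
    exact (G.Rge _).add_mem hy hz
  · intro r y _ hy
    rw [smul_eq_mul]
    exact G.mul_mem_Rge r hy

theorem exists_witness {T : Set R} {d n : ℕ} (hd : 1 ≤ d) (hn : 1 ≤ n)
    (hT : T ⊆ (G.deg (d : ℤ) : Set R)) (hpow : Ideal.span T ^ n ≠ ⊥) :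
    ∃ (w : R) (u : Fin G.ngens → R), w ≠ 0 ∧ w ∈ G.deg ((d : ℤ) * n) ∧
      w ∈ Ideal.span T ^ n ∧
      (∀ l, u l ∈ G.deg ((d : ℤ) * n - 1) ∧ u l ∈ Ideal.span T ^ (n - 1)) ∧
      w = ∑ l, G.gen l * u l := by
  -- find a nonzero product w = q * t
  rw [span_pow_eq] at hpow
  have h1 : ∃ x ∈ T ^ n, x ≠ 0 := by
    by_contra h
    push_neg at h
    exact hpow (Ideal.span_eq_bot.mpr h)
  obtain ⟨w, hwmem, hwne⟩ := h1
  have hn' : n = (n - 1) + 1 := (Nat.sub_add_cancel hn).symm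
  have hwmem' : w ∈ T ^ (n - 1) * T := by rw [← pow_succ, ← hn']; exact hwmem
  rw [Set.mem_mul] at hwmem'
  obtain ⟨q, hq, t, ht, rfl⟩ := hwmem'
  -- q has degree d * (n - 1)
  have hqdeg : q ∈ G.deg ((d : ℤ) * n - d) := by
    have := G.set_pow_subset_deg hT (n - 1) q hq
    convert this using 2
    push_cast [Nat.cast_sub hn]
    ring
  have hqI : q ∈ Ideal.span T ^ (n - 1) := by
    rw [span_pow_eq]
    exact Ideal.subset_span hq
  -- decompose t
  have htdeg : t ∈ G.deg 1 * G.deg ((d : ℤ) - 1) := by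
    have h0 : t ∈ G.deg ((d : ℤ)) := hT ht
    have h2 : (d : ℤ) = ((d - 1 : ℕ) : ℤ) + 1 := by omega
    rw [h2, G.standard (d - 1)] at h0
    rwa [show ((d - 1 : ℕ) : ℤ) = (d : ℤ) - 1 by omega] at h0
  have key : ∃ u : Fin G.ngens → R,
      (∀ l, u l ∈ G.deg ((d : ℤ) * n - 1) ∧ u l ∈ Ideal.span T ^ (n - 1)) ∧
      t * q = ∑ l, G.gen l * u l := by
    refine Submodule.mul_induction_on
      (C := fun t => ∃ u : Fin G.ngens → R,
        (∀ l, u l ∈ G.deg ((d : ℤ) * n - 1) ∧ u l ∈ Ideal.span T ^ (n - 1)) ∧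
        t * q = ∑ l, G.gen l * u l) htdeg ?_ ?_
    · intro a ha b hb
      rw [← G.gen_span, Submodule.mem_span_range_iff_exists_fun] at ha
      obtain ⟨c, rfl⟩ := ha
      refine ⟨fun l => c l • (b * q), fun l => ⟨?_, ?_⟩, ?_⟩
      · have h3 := G.mul_mem_deg hb hqdeg
        have h4 : (d : ℤ) - 1 + ((d : ℤ) * n - d) = (d : ℤ) * n - 1 := by ring
        rw [h4] at h3
        exact (G.deg _).smul_mem _ h3
      · have h5 : b * q ∈ Ideal.span T ^ (n - 1) := Ideal.mul_mem_left _ b hqI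
        show c l • (b * q) ∈ Ideal.span T ^ (n - 1)
        rw [Algebra.smul_def]
        exact Ideal.mul_mem_left _ _ h5
      · simp only [Finset.sum_mul, smul_mul_assoc, mul_smul_comm, mul_assoc]
    · intro x y ⟨u, hu, hx⟩ ⟨v, hv, hy⟩
      refine ⟨u + v, fun l => ⟨(G.deg _).add_mem (hu l).1 (hv l).1,
        (Ideal.span T ^ (n - 1)).add_mem (hu l).2 (hv l).2⟩, ?_⟩
      rw [add_mul, hx, hy, ← Finset.sum_add_distrib]
      congr 1
      funext l
      rw [Pi.add_apply, mul_add]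
  obtain ⟨u, hu, hqt⟩ := key
  refine ⟨q * t, u, hwne, ?_, ?_, hu, by rw [mul_comm]; exact hqt⟩
  · have h6 := G.mul_mem_deg hqdeg (hT ht)
    convert h6 using 2
    ring
  · rw [span_pow_eq]
    exact Ideal.subset_span hwmem

section Koszul

variable (G : StdGraded k R)

theorem kosD_apply (f : Finset (Fin G.ngens) → R) (t : Finset (Fin G.ngens)) :
    kosD G f t =
      ∑ j ∈ tᶜ, (-1 : R) ^ ((t.filter fun l => l < j).card) * G.gen j * f (insert j t) := rfl

theorem kosD_add (f g : Finset (Fin G.ngens) → R) :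
    kosD G (f + g) = kosD G f + kosD G g := by
  funext t
  simp only [kosD_apply, Pi.add_apply, mul_add, Finset.sum_add_distrib]

theorem kosD_smul (r : R) (f : Finset (Fin G.ngens) → R) :
    kosD G (r • f) = r • kosD G f := by
  funext t
  simp only [kosD_apply, Pi.smul_apply, smul_eq_mul, Finset.mul_sum]
  apply Finset.sum_congr rfl
  intro j _
  ring

theorem kosD_zero : kosD G (0 : Finset (Fin G.ngens) → R) = 0 := by
  funext t
  simp [kosD_apply]

/-- helper: counting the filter of an insert. -/
theorem card_filter_insert (t : Finset (Fin G.ngens)) {j : Fin G.ngens} (hj : j ∉ t)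
    (m : Fin G.ngens) :
    ((insert j t).filter fun l => l < m).card =
      (t.filter fun l => l < m).card + (if j < m then 1 else 0) := by
  rw [Finset.filter_insert]
  by_cases h : j < m
  · rw [if_pos h, if_pos h,
      Finset.card_insert_of_notMem (fun hmem => hj (Finset.mem_of_mem_filter j hmem))]
  · rw [if_neg h, if_neg h, add_zero]

/-- The Koszul differential squares to zero. -/
theorem kosD_kosD (f : Finset (Fin G.ngens) → R) : kosD G (kosD G f) = 0 := by
  funext t
  show kosD G (kosD G f) t = 0
  rw [kosD_apply]
  have expand : ∀ j ∈ tᶜ,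
      (-1 : R) ^ ((t.filter fun l => l < j).card) * G.gen j * (kosD G f) (insert j t) =
      ∑ m ∈ tᶜ.erase j,
        (if j = m then 0 else
          (-1 : R) ^ ((t.filter fun l => l < j).card) * G.gen j *
            ((-1 : R) ^ (((insert j t).filter fun l => l < m).card) * G.gen m *
              f (insert m (insert j t)))) := by
    intro j hj
    rw [kosD_apply, Finset.mul_sum, Finset.compl_insert]
    apply Finset.sum_congr rfl
    intro m hm
    rw [if_neg (Ne.symm (Finset.ne_of_mem_erase hm))]
  rw [Finset.sum_congr rfl expand]
  have step2 : ∀ j ∈ tᶜ,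
      (∑ m ∈ tᶜ.erase j,
        (if j = m then 0 else
          (-1 : R) ^ ((t.filter fun l => l < j).card) * G.gen j *
            ((-1 : R) ^ (((insert j t).filter fun l => l < m).card) * G.gen m *
              f (insert m (insert j t))))) =
      ∑ m ∈ tᶜ,
        (if j = m then 0 else
          (-1 : R) ^ ((t.filter fun l => l < j).card) * G.gen j *
            ((-1 : R) ^ (((insert j t).filter fun l => l < m).card) * G.gen m *
              f (insert m (insert j t)))) := by
    intro j hj
    apply Finset.sum_erase
    rw [if_pos rfl]
  rw [Finset.sum_congr rfl step2, ← Finset.sum_product']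
  set F := fun p : Fin G.ngens × Fin G.ngens =>
    (if p.1 = p.2 then 0 else
      (-1 : R) ^ ((t.filter fun l => l < p.1).card) * G.gen p.1 *
        ((-1 : R) ^ (((insert p.1 t).filter fun l => l < p.2).card) * G.gen p.2 *
          f (insert p.2 (insert p.1 t)))) with hF
  apply Finset.sum_involution (fun p _ => (p.2, p.1))
  · -- antisymmetry
    intro p hp
    rcases Finset.mem_product.mp hp with ⟨h1, h2⟩
    rcases eq_or_ne p.1 p.2 with he | hne
    · simp [hF, he]
    · simp only [hF]
      rw [if_neg hne, if_neg hne.symm]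
      have hj : p.1 ∉ t := Finset.mem_compl.mp h1
      have hm : p.2 ∉ t := Finset.mem_compl.mp h2
      rw [G.card_filter_insert t hj p.2, G.card_filter_insert t hm p.1]
      rw [Finset.insert_comm p.2 p.1 t]
      rcases lt_or_gt_of_ne hne with hlt | hgt
      · rw [if_pos hlt, if_neg (asymm hlt)]
        ring
      · rw [if_neg (asymm hgt), if_pos hgt]
        ring
  · intro p hp hne hcon
    apply hne
    rw [if_pos (show p.1 = p.2 from (congrArg Prod.fst hcon).symm)]
  · intro p hp
    rcases Finset.mem_product.mp hp with ⟨h1, h2⟩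
    exact Finset.mem_product.mpr ⟨h2, h1⟩
  · intro p hp
    rfl

/-- Exterior multiplication by the `l`-th basis vector. -/
noncomputable def extMul (l : Fin G.ngens) (f : Finset (Fin G.ngens) → R) :
    Finset (Fin G.ngens) → R := fun s =>
  if l ∈ s then (-1 : R) ^ ((s.filter fun i => i < l).card) * f (s.erase l) else 0

theorem negpow_sq (A : ℕ) : (-1 : R) ^ A * (-1 : R) ^ A = 1 := by
  rw [← pow_add]
  exact Even.neg_one_pow ⟨A, rfl⟩

theorem filter_lt_erase (l : Fin G.ngens) (s : Finset (Fin G.ngens)) :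
    ((s.erase l).filter fun i => i < l) = s.filter fun i => i < l := by
  rw [Finset.filter_erase]
  apply Finset.erase_eq_of_notMem
  intro h
  exact lt_irrefl l (Finset.mem_filter.mp h).2

/-- Cartan homotopy identity: multiplication by `gen l` on the Koszul complex is
homotopic to zero via exterior multiplication by `e_l`. -/
theorem cartan (l : Fin G.ngens) (f : Finset (Fin G.ngens) → R)
    (s : Finset (Fin G.ngens)) :
    kosD G (extMul G l f) s + extMul G l (kosD G f) s = G.gen l * f s := by
  by_cases hl : l ∈ s
  · -- case l ∈ s
    have hlc : l ∉ sᶜ := by simp [Finset.mem_compl, hl]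
    have h1 : extMul G l (kosD G f) s = G.gen l * f s +
        ∑ j ∈ sᶜ, (-1 : R) ^ ((s.filter fun i => i < l).card) *
          ((-1 : R) ^ (((s.erase l).filter fun i => i < j).card) * G.gen j *
            f (insert j (s.erase l))) := by
      show (if l ∈ s then
          (-1 : R) ^ ((s.filter fun i => i < l).card) * (kosD G f) (s.erase l) else 0) = _
      rw [if_pos hl, kosD_apply, Finset.compl_erase, Finset.sum_insert hlc]
      rw [filter_lt_erase, Finset.insert_erase hl, mul_add, Finset.mul_sum]
      congr 1
      rw [show (-1 : R) ^ ((s.filter fun i => i < l).card) *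
          ((-1 : R) ^ ((s.filter fun i => i < l).card) * G.gen l * f s) =
          ((-1 : R) ^ ((s.filter fun i => i < l).card) *
            (-1 : R) ^ ((s.filter fun i => i < l).card)) * (G.gen l * f s) by ring,
        negpow_sq, one_mul]
    have h2 : kosD G (extMul G l f) s =
        ∑ j ∈ sᶜ, (-1 : R) ^ ((s.filter fun i => i < j).card) * G.gen j *
          ((-1 : R) ^ ((s.filter fun i => i < l).card + if j < l then 1 else 0) *
            f (insert j (s.erase l))) := by
      rw [kosD_apply]
      apply Finset.sum_congr rfl
      intro j hj
      have hjs : j ∉ s := Finset.mem_compl.mp hj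
      have hne : j ≠ l := fun h => hjs (h ▸ hl)
      have hval : extMul G l f (insert j s) =
          (-1 : R) ^ ((s.filter fun i => i < l).card + if j < l then 1 else 0) *
            f (insert j (s.erase l)) := by
        show (if l ∈ insert j s then
            (-1 : R) ^ (((insert j s).filter fun i => i < l).card) *
              f ((insert j s).erase l) else 0) = _
        rw [if_pos (Finset.mem_insert_of_mem hl), G.card_filter_insert s hjs l,
          Finset.erase_insert_of_ne hne]
      rw [hval]
    rw [h1, h2]
    have hsum : (∑ j ∈ sᶜ, (-1 : R) ^ ((s.filter fun i => i < j).card) * G.gen j *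
          ((-1 : R) ^ ((s.filter fun i => i < l).card + if j < l then 1 else 0) *
            f (insert j (s.erase l)))) +
        (∑ j ∈ sᶜ, (-1 : R) ^ ((s.filter fun i => i < l).card) *
          ((-1 : R) ^ (((s.erase l).filter fun i => i < j).card) * G.gen j *
            f (insert j (s.erase l)))) = 0 := by
      rw [← Finset.sum_add_distrib]
      apply Finset.sum_eq_zero
      intro j hj
      have hjs : j ∉ s := Finset.mem_compl.mp hj
      have hne : j ≠ l := fun h => hjs (h ▸ hl)
      have hA : (s.filter fun i => i < j).card =
          ((s.erase l).filter fun i => i < j).card + (if l < j then 1 else 0) := by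
        conv_lhs => rw [← Finset.insert_erase hl]
        exact G.card_filter_insert (s.erase l) (Finset.notMem_erase l s) j
      rw [hA]
      rcases lt_or_gt_of_ne hne with hlt | hgt
      · rw [if_pos hlt, if_neg (asymm hlt)]
        ring
      · rw [if_neg (asymm hgt), if_pos hgt]
        ring
    linear_combination hsum
  · -- case l ∉ s
    have h0 : extMul G l (kosD G f) s = 0 := if_neg hl
    rw [h0, add_zero, kosD_apply]
    rw [Finset.sum_eq_single_of_mem l (Finset.mem_compl.mpr hl) ?_]
    · have hval : extMul G l f (insert l s) =
          (-1 : R) ^ ((s.filter fun i => i < l).card) * f s := by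
        show (if l ∈ insert l s then
            (-1 : R) ^ (((insert l s).filter fun i => i < l).card) *
              f ((insert l s).erase l) else 0) = _
        rw [if_pos (Finset.mem_insert_self l s), Finset.erase_insert hl,
          Finset.filter_insert, if_neg (lt_irrefl l)]
      rw [hval, show (-1 : R) ^ ((s.filter fun i => i < l).card) * G.gen l *
          ((-1 : R) ^ ((s.filter fun i => i < l).card) * f s) =
          ((-1 : R) ^ ((s.filter fun i => i < l).card) *
            (-1 : R) ^ ((s.filter fun i => i < l).card)) * (G.gen l * f s) by ring,
        negpow_sq, one_mul]
    · intro j hj hne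
      have hval : extMul G l f (insert j s) = 0 := by
        apply if_neg
        intro h
        rcases Finset.mem_insert.mp h with h' | h'
        · exact hne h'.symm
        · exact hl h'
      rw [hval, mul_zero]

end Koszul

section Proj

/-- The projection onto the degree-`m` component. -/
noncomputable def proj (m : ℤ) : R →ₗ[k] R :=
  (G.deg m).subtype.comp
    ((DirectSum.component k ℤ (fun j => (G.deg j : Submodule k R)) m).comp
      ((LinearEquiv.ofBijective (DirectSum.coeLinearMap G.deg) G.internal).symm).toLinearMap)

theorem proj_eq_of_mem {m : ℤ} {x : R} (hx : x ∈ G.deg m) : G.proj m x = x := by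
  unfold proj
  simp only [LinearMap.coe_comp, Function.comp_apply, LinearEquiv.coe_coe,
    Submodule.coe_subtype]
  rw [show (DirectSum.component k ℤ (fun j => (G.deg j : Submodule k R)) m)
      (((LinearEquiv.ofBijective (DirectSum.coeLinearMap G.deg) G.internal).symm) x) =
      ((LinearEquiv.ofBijective (DirectSum.coeLinearMap G.deg) G.internal).symm) x m from rfl]
  rw [G.internal.ofBijective_coeLinearMap_of_mem hx]

theorem proj_eq_zero_of_mem {m j : ℤ} {x : R} (hx : x ∈ G.deg j) (hne : m ≠ j) :
    G.proj m x = 0 := by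
  unfold proj
  simp only [LinearMap.coe_comp, Function.comp_apply, LinearEquiv.coe_coe,
    Submodule.coe_subtype]
  rw [show (DirectSum.component k ℤ (fun j => (G.deg j : Submodule k R)) m)
      (((LinearEquiv.ofBijective (DirectSum.coeLinearMap G.deg) G.internal).symm) x) =
      ((LinearEquiv.ofBijective (DirectSum.coeLinearMap G.deg) G.internal).symm) x m from rfl]
  rw [G.internal.ofBijective_coeLinearMap_of_mem_ne (Ne.symm hne) hx]
  rfl

theorem proj_mem (m : ℤ) (x : R) : G.proj m x ∈ G.deg m := by
  unfold proj
  simp only [LinearMap.coe_comp, Function.comp_apply, LinearEquiv.coe_coe,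
    Submodule.coe_subtype]
  exact Submodule.coe_mem _

/-- Projection against multiplication by a homogeneous element. -/
theorem proj_mul {e : ℤ} {a : R} (ha : a ∈ G.deg e) (m : ℤ) (x : R) :
    G.proj m (a * x) = a * G.proj (m - e) x := by
  have hx : x ∈ ⨆ j : ℤ, G.deg j := by rw [G.top_decomp]; trivial
  refine Submodule.iSup_induction (motive := fun x => G.proj m (a * x) = a * G.proj (m - e) x)
    G.deg hx ?_ ?_ ?_
  · intro b y hy
    have hay : a * y ∈ G.deg (e + b) := G.mul_mem_deg ha hy
    by_cases hmb : m = e + b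
    · rw [G.proj_eq_of_mem (show a * y ∈ G.deg m from hmb ▸ hay),
        G.proj_eq_of_mem (show y ∈ G.deg (m - e) from by rw [show m - e = b by omega]; exact hy)]
    · rw [G.proj_eq_zero_of_mem hay hmb,
        G.proj_eq_zero_of_mem hy (show m - e ≠ b by omega), mul_zero]
  · show G.proj m (a * 0) = a * G.proj (m - e) 0
    rw [mul_zero, map_zero, map_zero, mul_zero]
  · intro y z hy hz
    show G.proj m (a * (y + z)) = a * G.proj (m - e) (y + z)
    rw [mul_add, map_add, map_add, mul_add]
    show _ = a * G.proj (m-e) y + a * G.proj (m-e) z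
    rw [hy, hz]

/-- Powers of an ideal generated in a single degree are homogeneous:
stable under all projections. -/
theorem proj_mem_pow {T : Set R} {d : ℕ} (hT : T ⊆ (G.deg (d : ℤ) : Set R)) (p : ℕ)
    {x : R} (hx : x ∈ Ideal.span T ^ p) (m : ℤ) : G.proj m x ∈ Ideal.span T ^ p := by
  rw [span_pow_eq] at hx ⊢
  induction hx using Submodule.span_induction generalizing m with
  | mem y hy =>
    have hydeg : y ∈ G.deg ((d : ℤ) * p) := G.set_pow_subset_deg hT p y hy
    by_cases hm : m = (d : ℤ) * p
    · rw [G.proj_eq_of_mem (hm ▸ hydeg)]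
      exact Ideal.subset_span hy
    · rw [G.proj_eq_zero_of_mem hydeg hm]
      exact Submodule.zero_mem _
  | zero => rw [map_zero]; exact Submodule.zero_mem _
  | add y z _ _ hy hz => rw [map_add]; exact Submodule.add_mem _ (hy m) (hz m)
  | smul r y _ hy =>
    rw [smul_eq_mul]
    have hr : r ∈ ⨆ j : ℤ, G.deg j := by rw [G.top_decomp]; trivial
    refine Submodule.iSup_induction
      (motive := fun r => ∀ m' : ℤ, G.proj m' (r * y) ∈ Ideal.span (T ^ p)) G.deg hr ?_ ?_ ?_ m
    · intro e a ha m'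
      rw [G.proj_mul ha]
      exact Ideal.mul_mem_left _ a (hy (m' - e))
    · intro m'
      rw [zero_mul, map_zero]; exact Submodule.zero_mem _
    · intro a b hay hby m'
      rw [add_mul, map_add]
      exact Submodule.add_mem _ (hay m') (hby m')

end Proj

section CycBdry

variable (G : StdGraded k R) (A B : Ideal R) (i : ℕ)

theorem kosD_mem_ideal {h : Finset (Fin G.ngens) → R} (hh : ∀ s, h s ∈ B) (t : Finset (Fin G.ngens)) :
    kosD G h t ∈ B := by
  rw [kosD_apply]
  exact Submodule.sum_mem _ fun j _ => Ideal.mul_mem_left _ _ (hh _)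

/-- The module of Koszul `i`-cycles with entries in `A`, relative to `B`. -/
noncomputable def cyc : Submodule R (Finset (Fin G.ngens) → R) where
  carrier := {f | (∀ s, s.card ≠ i → f s = 0) ∧ (∀ s, f s ∈ A) ∧ (∀ t, kosD G f t ∈ B)}
  add_mem' := by
    rintro f g ⟨hf1, hf2, hf3⟩ ⟨hg1, hg2, hg3⟩
    refine ⟨fun s hs => ?_, fun s => A.add_mem (hf2 s) (hg2 s), fun t => ?_⟩
    · show f s + g s = 0
      rw [hf1 s hs, hg1 s hs, add_zero]
    · rw [kosD_add]
      exact B.add_mem (hf3 t) (hg3 t)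
  zero_mem' := ⟨fun s _ => rfl, fun s => A.zero_mem, fun t => by
    rw [kosD_zero]; exact B.zero_mem⟩
  smul_mem' := by
    rintro r f ⟨hf1, hf2, hf3⟩
    refine ⟨fun s hs => ?_, fun s => A.smul_mem r (hf2 s), fun t => ?_⟩
    · show r * f s = 0
      rw [hf1 s hs, mul_zero]
    · rw [kosD_smul]
      exact B.smul_mem r (hf3 t)

/-- The module of Koszul `i`-boundaries (modulo entries in `B`) with entries in `A`. -/
noncomputable def bdry : Submodule R (Finset (Fin G.ngens) → R) where
  carrier := {f | (∀ s, s.card ≠ i → f s = 0) ∧ (∀ s, f s ∈ A) ∧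
    ∃ g, (∀ s, s.card ≠ i + 1 → g s = 0) ∧ (∀ s, g s ∈ A) ∧
      (∀ s, f s - kosD G g s ∈ B)}
  add_mem' := by
    rintro f f' ⟨hf1, hf2, g, hg1, hg2, hg3⟩ ⟨hf1', hf2', g', hg1', hg2', hg3'⟩
    refine ⟨fun s hs => ?_, fun s => A.add_mem (hf2 s) (hf2' s),
      g + g', fun s hs => ?_, fun s => A.add_mem (hg2 s) (hg2' s), fun s => ?_⟩
    · show f s + f' s = 0
      rw [hf1 s hs, hf1' s hs, add_zero]
    · show g s + g' s = 0
      rw [hg1 s hs, hg1' s hs, add_zero]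
    · rw [kosD_add]
      have : (f + f') s - (kosD G g + kosD G g') s =
          (f s - kosD G g s) + (f' s - kosD G g' s) := by
        show f s + f' s - (kosD G g s + kosD G g' s) = _
        ring
      rw [this]
      exact B.add_mem (hg3 s) (hg3' s)
  zero_mem' := ⟨fun s _ => rfl, fun s => A.zero_mem, 0, fun s _ => rfl,
    fun s => A.zero_mem, fun s => by rw [kosD_zero]; simpa using B.zero_mem⟩
  smul_mem' := by
    rintro r f ⟨hf1, hf2, g, hg1, hg2, hg3⟩
    refine ⟨fun s hs => ?_, fun s => A.smul_mem r (hf2 s),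
      r • g, fun s hs => ?_, fun s => A.smul_mem r (hg2 s), fun s => ?_⟩
    · show r * f s = 0
      rw [hf1 s hs, mul_zero]
    · show r * g s = 0
      rw [hg1 s hs, mul_zero]
    · rw [kosD_smul]
      have : (r • f) s - (r • kosD G g) s = r • (f s - kosD G g s) := by
        show r * f s - r * kosD G g s = r * (f s - kosD G g s)
        ring
      rw [this]
      exact B.smul_mem r (hg3 s)

theorem bdry_le_cyc : bdry G A B i ≤ cyc G A B i := by
  rintro f ⟨hf1, hf2, g, hg1, hg2, hg3⟩
  refine ⟨hf1, hf2, fun t => ?_⟩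
  have hdecomp : f = (f - kosD G g) + kosD G g := by ring
  have : kosD G f t = kosD G (f - kosD G g) t + kosD G (kosD G g) t := by
    conv_lhs => rw [hdecomp]
    have := kosD_add G (f - kosD G g) (kosD G g)
    rw [this]
    rfl
  rw [this, kosD_kosD]
  show kosD G (f - kosD G g) t + (0 : Finset (Fin G.ngens) → R) t ∈ B
  rw [Pi.zero_apply, add_zero]
  exact kosD_mem_ideal G B (h := f - kosD G g) (fun s => hg3 s) t

/-- Multiplication by a generator maps cycles into boundaries (Cartan homotopy). -/
theorem gen_smul_cyc_mem_bdry (l : Fin G.ngens) {f : Finset (Fin G.ngens) → R}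
    (hf : f ∈ cyc G A B i) : G.gen l • f ∈ bdry G A B i := by
  obtain ⟨hf1, hf2, hf3⟩ := hf
  refine ⟨fun s hs => ?_, fun s => A.smul_mem _ (hf2 s),
    extMul G l f, fun s hs => ?_, fun s => ?_, fun s => ?_⟩
  · show G.gen l * f s = 0
    rw [hf1 s hs, mul_zero]
  · show (if l ∈ s then (-1 : R) ^ ((s.filter fun x => x < l).card) * f (s.erase l) else 0) = 0
    by_cases hl : l ∈ s
    · rw [if_pos hl, hf1 (s.erase l) ?_, mul_zero]
      intro hcard
      apply hs
      rw [Finset.card_erase_of_mem hl] at hcard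
      have hpos : 1 ≤ s.card := Finset.card_pos.mpr ⟨l, hl⟩
      omega
    · rw [if_neg hl]
  · show (if l ∈ s then (-1 : R) ^ ((s.filter fun x => x < l).card) * f (s.erase l) else 0) ∈ A
    by_cases hl : l ∈ s
    · rw [if_pos hl]
      exact Ideal.mul_mem_left _ _ (hf2 _)
    · rw [if_neg hl]
      exact A.zero_mem
  · have hc := cartan G l f s
    have : (G.gen l • f) s - kosD G (extMul G l f) s = extMul G l (kosD G f) s := by
      show G.gen l * f s - kosD G (extMul G l f) s = _
      rw [← hc]
      ring
    rw [this]
    show (if l ∈ s then (-1 : R) ^ ((s.filter fun x => x < l).card) * kosD G f (s.erase l)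
        else 0) ∈ B
    by_cases hl : l ∈ s
    · rw [if_pos hl]
      exact Ideal.mul_mem_left _ _ (hf3 _)
    · rw [if_neg hl]
      exact B.zero_mem

end CycBdry

section Finiteness

variable (G : StdGraded k R)

theorem deg_le_adjoin (j : ℤ) :
    G.deg j ≤ Subalgebra.toSubmodule (Algebra.adjoin k (Set.range G.gen)) := by
  have key : ∀ p : ℕ,
      G.deg (p : ℤ) ≤ Subalgebra.toSubmodule (Algebra.adjoin k (Set.range G.gen)) := by
    intro p
    induction p with
    | zero =>
      intro x hx
      rw [show ((0 : ℕ) : ℤ) = 0 from rfl, G.deg_zero, Submodule.mem_one] at hx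
      obtain ⟨c, rfl⟩ := hx
      exact Subalgebra.algebraMap_mem _ c
    | succ p ih =>
      intro x hx
      rw [show ((p + 1 : ℕ) : ℤ) = (p : ℤ) + 1 by push_cast; ring, G.standard p] at hx
      refine Submodule.mul_induction_on
        (C := fun x => x ∈ Subalgebra.toSubmodule (Algebra.adjoin k (Set.range G.gen)))
        hx ?_ ?_
      · intro a ha b hb
        have ha' : a ∈ Algebra.adjoin k (Set.range G.gen) := by
          have hle : G.deg 1 ≤ Subalgebra.toSubmodule (Algebra.adjoin k (Set.range G.gen)) := by
            rw [← G.gen_span]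
            rw [Submodule.span_le]
            intro y hy
            exact Algebra.subset_adjoin hy
          exact hle ha
        exact Subalgebra.mul_mem _ ha' (ih hb)
      · intro a b ha hb
        exact Subalgebra.add_mem _ ha hb
  rcases lt_or_ge j 0 with h | h
  · rw [G.bot_of_neg j h]; exact bot_le
  · obtain ⟨p, rfl⟩ := Int.eq_ofNat_of_zero_le h
    exact key p

include G in
theorem noetherian : IsNoetherianRing R := by
  classical
  have hft : Algebra.FiniteType k R := by
    refine ⟨⟨Finset.univ.image G.gen, ?_⟩⟩
    rw [Finset.coe_image, Finset.coe_univ, Set.image_univ, eq_top_iff]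
    intro x _
    have hx : x ∈ ⨆ j : ℤ, G.deg j := by rw [G.top_decomp]; trivial
    refine Submodule.iSup_induction
      (motive := fun x => x ∈ Algebra.adjoin k (Set.range G.gen)) G.deg hx ?_ ?_ ?_
    · intro j y hy
      exact G.deg_le_adjoin j hy
    · exact Subalgebra.zero_mem _
    · intro a b ha hb
      exact Subalgebra.add_mem _ ha hb
  exact Algebra.FiniteType.isNoetherianRing k R

theorem kosD_ksmul (c : k) (g : Finset (Fin G.ngens) → R) :
    kosD G (c • g) = c • kosD G g := by
  have h1 : c • g = (algebraMap k R c) • g := by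
    funext u
    rw [Pi.smul_apply, Pi.smul_apply, algebraMap_smul]
  have h2 : c • kosD G g = (algebraMap k R c) • kosD G g := by
    funext u
    rw [Pi.smul_apply, Pi.smul_apply, algebraMap_smul]
  rw [h1, h2, kosD_smul]

theorem proj_kosD (m : ℤ) (g : Finset (Fin G.ngens) → R) (s : Finset (Fin G.ngens)) :
    G.proj m (kosD G g s) = kosD G (fun u => G.proj (m - 1) (g u)) s := by
  rw [kosD_apply, kosD_apply, map_sum]
  apply Finset.sum_congr rfl
  intro j _
  have hgen1 : (-1 : R) ^ ((s.filter fun l => l < j).card) * G.gen j ∈ G.deg 1 := by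
    rcases Nat.even_or_odd ((s.filter fun l => l < j).card) with he | ho
    · rw [he.neg_one_pow, one_mul]
      exact G.gen_mem j
    · rw [ho.neg_one_pow, neg_one_mul]
      exact Submodule.neg_mem _ (G.gen_mem j)
  exact G.proj_mul hgen1 m (g (insert j s))

theorem torNonzero_finite (A B : Ideal R)
    (hA : ∀ (m : ℤ) (x : R), x ∈ A → G.proj m x ∈ A)
    (hB : ∀ (m : ℤ) (x : R), x ∈ B → G.proj m x ∈ B)
    (i : ℕ) : {j : ℤ | TorNonzero G A B i j}.Finite := by
  classical
  haveI := G.noetherian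
  set D := {j : ℤ | TorNonzero G A B i j} with hD
  have hwit : ∀ j ∈ D, ∃ f : Finset (Fin G.ngens) → R, f ∈ cyc G A B i ∧
      (∀ s, f s ∈ G.deg (j - i)) ∧
      ¬ ∃ g, (∀ s, if s.card = i + 1 then g s ∈ A ∧ g s ∈ G.deg (j - i - 1) else g s = 0) ∧
        (∀ s, f s - kosD G g s ∈ B) := by
    intro j hj
    obtain ⟨f, h1, h2, h3⟩ := hj
    refine ⟨f, ⟨?_, ?_, h2⟩, ?_, h3⟩
    · intro s hs
      have := h1 s; rw [if_neg hs] at this; exact this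
    · intro s
      have := h1 s
      by_cases hc : s.card = i
      · rw [if_pos hc] at this; exact this.1
      · rw [if_neg hc] at this; rw [this]; exact A.zero_mem
    · intro s
      have := h1 s
      by_cases hc : s.card = i
      · rw [if_pos hc] at this; exact this.2
      · rw [if_neg hc] at this; rw [this]; exact Submodule.zero_mem _
  choose F hF using hwit
  set N : Submodule R ↥(cyc G A B i) := (bdry G A B i).comap (cyc G A B i).subtype with hN
  haveI : Module.Finite R ↥(cyc G A B i) := by
    rw [Module.Finite.iff_fg]
    exact IsNoetherian.noetherian _
  haveI hfinH : Module.Finite R (↥(cyc G A B i) ⧸ N) :=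
    Module.Finite.of_surjective N.mkQ (Submodule.Quotient.mk_surjective N)
  -- the maximal ideal kills the quotient
  have hmH : ∀ z ∈ Ideal.span (Set.range G.gen), ∀ h : ↥(cyc G A B i) ⧸ N, z • h = 0 := by
    intro z hz
    refine Submodule.span_induction ?_ ?_ ?_ ?_ hz
    · rintro y ⟨l, rfl⟩ h
      obtain ⟨x, rfl⟩ := Submodule.Quotient.mk_surjective N h
      rw [← Submodule.Quotient.mk_smul, Submodule.Quotient.mk_eq_zero]
      show ((G.gen l • x : ↥(cyc G A B i)) : Finset (Fin G.ngens) → R) ∈ bdry G A B i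
      rw [SetLike.val_smul]
      exact gen_smul_cyc_mem_bdry G A B i l x.2
    · intro h
      rw [zero_smul]
    · intro a b _ _ ha hb h
      rw [add_smul, ha, hb, add_zero]
    · intro r a _ ha h
      rw [smul_eq_mul, mul_smul, ha, smul_zero]
  -- k-finiteness of the quotient
  obtain ⟨c, hc⟩ := Module.Finite.fg_top (R := R) (M := ↥(cyc G A B i) ⧸ N)
  have hRge1 : ∀ z ∈ G.Rge 1, z ∈ Ideal.span (Set.range G.gen) := by
    intro z hz
    refine G.Rge_induction hz ?_ (Ideal.zero_mem _) (fun a b ha hb => Ideal.add_mem _ ha hb)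
    intro j hj y hy
    have hj' : j = ((j - 1).toNat : ℤ) + 1 := by omega
    rw [hj', G.standard] at hy
    refine Submodule.mul_induction_on
      (C := fun y => y ∈ Ideal.span (Set.range G.gen)) hy ?_ ?_
    · intro a ha b hb
      have ha' : a ∈ Ideal.span (Set.range G.gen) := by
        have hle : G.deg 1 ≤ Submodule.restrictScalars k (Ideal.span (Set.range G.gen)) := by
          rw [← G.gen_span, Submodule.span_le]
          intro y hy
          exact Ideal.subset_span hy
        exact hle ha
      exact Ideal.mul_mem_right b _ ha'
    · intro a b ha hb
      exact Ideal.add_mem _ ha hb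
  have hkspan : ∀ h : ↥(cyc G A B i) ⧸ N, h ∈ Submodule.span k (↑c : Set (↥(cyc G A B i) ⧸ N)) := by
    intro h
    have hh : h ∈ Submodule.span R (↑c : Set (↥(cyc G A B i) ⧸ N)) := by
      rw [hc]; trivial
    refine Submodule.span_induction ?_ ?_ ?_ ?_ hh
    · intro y hy
      exact Submodule.subset_span hy
    · exact Submodule.zero_mem _
    · intro a b _ _ ha hb
      exact Submodule.add_mem _ ha hb
    · intro r y _ hy
      -- decompose r into degree-0 part and positive part
      have hr : r ∈ G.deg 0 ⊔ G.Rge 1 := by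
        have : (⊤ : Submodule k R) ≤ G.deg 0 ⊔ G.Rge 1 := by
          rw [← G.top_decomp]
          refine iSup_le fun j => ?_
          rcases lt_trichotomy j 0 with h0 | h0 | h0
          · rw [G.bot_of_neg j h0]; exact bot_le
          · subst h0; exact le_sup_left
          · refine le_trans ?_ le_sup_right
            intro x hx
            exact G.mem_Rge hx (by omega)
        exact this trivial
      rw [Submodule.mem_sup] at hr
      obtain ⟨y0, hy0, z, hz, rfl⟩ := hr
      rw [add_smul]
      have hz0 : z • y = 0 := hmH z (hRge1 z hz) y
      rw [hz0, add_zero]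
      rw [G.deg_zero, Submodule.mem_one] at hy0
      obtain ⟨c0, rfl⟩ := hy0
      rw [algebraMap_smul]
      exact Submodule.smul_mem _ c0 hy
  haveI hkfin : Module.Finite k (↥(cyc G A B i) ⧸ N) := by
    rw [Module.finite_def]
    exact ⟨c, le_antisymm le_top (fun h _ => hkspan h)⟩
  -- the classes of the witnesses are linearly independent over k
  set v : D → (↥(cyc G A B i) ⧸ N) := fun j => N.mkQ ⟨F j.1 j.2, (hF j.1 j.2).1⟩ with hv
  have hmk : ∀ (a : k) (x : ↥(cyc G A B i)), N.mkQ (a • x) = a • N.mkQ x := by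
    intro a x
    rw [← algebraMap_smul R a x, map_smul, algebraMap_smul]
  have hli : LinearIndependent k v := by
    rw [linearIndependent_iff]
    intro l hl
    by_contra hlne
    obtain ⟨t, ht⟩ := Finsupp.ne_iff.mp hlne
    rw [Finsupp.coe_zero, Pi.zero_apply] at ht
    have htsupp : t ∈ l.support := Finsupp.mem_support_iff.mpr ht
    -- the corresponding sum of witnesses is a boundary
    have hsum : (∑ j ∈ l.support, l j • F j.1 j.2) ∈ bdry G A B i := by
      have h0 : (∑ j ∈ l.support, l j • (⟨F j.1 j.2, (hF j.1 j.2).1⟩ : ↥(cyc G A B i))) ∈ N := by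
        rw [← Submodule.Quotient.mk_eq_zero, ← Submodule.mkQ_apply, map_sum]
        rw [Finsupp.linearCombination_apply, Finsupp.sum] at hl
        rw [← hl]
        apply Finset.sum_congr rfl
        intro j _
        rw [hmk]
      have h1 := h0
      rw [hN, Submodule.mem_comap] at h1
      have h2 : ((cyc G A B i).subtype
          (∑ j ∈ l.support, l j • (⟨F j.1 j.2, (hF j.1 j.2).1⟩ : ↥(cyc G A B i)))) =
          ∑ j ∈ l.support, l j • F j.1 j.2 := by
        rw [map_sum]
        apply Finset.sum_congr rfl
        intro j _
        rfl
      rw [← h2]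
      exact h1
    obtain ⟨_, _, g, hg1, hg2, hg3⟩ := hsum
    -- project onto the degree of the t-th witness
    have hproj : ∀ s, G.proj ((t : ℤ) - i) ((∑ j ∈ l.support, l j • F j.1 j.2) s) =
        l t • F t.1 t.2 s := by
      intro s
      have hFs : (∑ j ∈ l.support, l j • F j.1 j.2) s =
          ∑ j ∈ l.support, l j • F j.1 j.2 s := by
        rw [Finset.sum_apply]
        rfl
      rw [hFs, map_sum, Finset.sum_eq_single_of_mem t htsupp]
      · rw [map_smul, G.proj_eq_of_mem ((hF t.1 t.2).2.1 s)]
      · intro j hjsupp hjne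
        rw [map_smul, G.proj_eq_zero_of_mem ((hF j.1 j.2).2.1 s) ?_, smul_zero]
        intro heq
        apply hjne
        apply Subtype.ext
        omega
    -- contradict non-boundaryness of the t-th witness
    apply (hF t.1 t.2).2.2
    refine ⟨fun u => (l t)⁻¹ • G.proj ((t : ℤ) - i - 1) (g u), ?_, ?_⟩
    · intro s
      by_cases hcard : s.card = i + 1
      · rw [if_pos hcard]
        constructor
        · show (l t)⁻¹ • G.proj ((t : ℤ) - i - 1) (g s) ∈ A
          rw [Algebra.smul_def]
          exact Ideal.mul_mem_left _ _ (hA _ _ (hg2 s))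
        · show (l t)⁻¹ • G.proj ((t : ℤ) - i - 1) (g s) ∈ G.deg ((t : ℤ) - i - 1)
          exact Submodule.smul_mem _ _ (G.proj_mem _ _)
      · rw [if_neg hcard]
        show (l t)⁻¹ • G.proj ((t : ℤ) - i - 1) (g s) = 0
        rw [hg1 s hcard, map_zero, smul_zero]
    · intro s
      have hBmem : G.proj ((t : ℤ) - i) ((∑ j ∈ l.support, l j • F j.1 j.2) s - kosD G g s) ∈ B :=
        hB _ _ (hg3 s)
      rw [map_sub, hproj s, proj_kosD] at hBmem
      have hrw : F t.1 t.2 s - kosD G (fun u => (l t)⁻¹ • G.proj ((t : ℤ) - i - 1) (g u)) s =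
          (l t)⁻¹ • (l t • F t.1 t.2 s -
            kosD G (fun u => G.proj ((t : ℤ) - i - 1) (g u)) s) := by
        rw [smul_sub, inv_smul_smul₀ ht]
        congr 1
        have : (fun u => (l t)⁻¹ • G.proj ((t : ℤ) - i - 1) (g u)) =
            (l t)⁻¹ • (fun u => G.proj ((t : ℤ) - i - 1) (g u)) := rfl
        rw [this, kosD_ksmul]
        rfl
      rw [hrw, Algebra.smul_def]
      exact Ideal.mul_mem_left _ _ hBmem
  have : Finite D := hli.finite
  exact Set.finite_coe_iff.mp this

end Finiteness

section Witness

variable (G : StdGraded k R)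

theorem torNonzero_witness {T : Set R} {d n : ℕ} (hd : 1 ≤ d) (hn : 1 ≤ n)
    (hT : T ⊆ (G.deg (d : ℤ) : Set R)) (hpow : Ideal.span T ^ n ≠ ⊥) :
    TorNonzero G (Ideal.span T ^ (n - 1)) (Ideal.span T ^ n) 1 ((d : ℤ) * n) := by
  classical
  obtain ⟨w, u, hw0, hwdeg, hwI, hu, hwsum⟩ := G.exists_witness hd hn hT hpow
  set f : Finset (Fin G.ngens) → R :=
    (fun s => if s.card = 1 then ∑ l ∈ s, u l else 0) with hfdef
  have hf1 : ∀ s, s.card = 1 → f s = ∑ l ∈ s, u l := fun s hs => if_pos hs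
  have hf0 : ∀ s, s.card ≠ 1 → f s = 0 := fun s hs => if_neg hs
  refine ⟨f, ?_, ?_, ?_⟩
  · intro s
    by_cases hc : s.card = 1
    · rw [if_pos hc, hf1 s hc]
      constructor
      · exact Submodule.sum_mem _ fun l _ => (hu l).2
      · rw [show (d : ℤ) * n - ((1 : ℕ) : ℤ) = (d : ℤ) * n - 1 by norm_num]
        exact Submodule.sum_mem _ fun l _ => (hu l).1
    · rw [if_neg hc, hf0 s hc]
  · intro t
    rcases Finset.eq_empty_or_nonempty t with rfl | htne
    · have hval : kosD G f ∅ = ∑ j, G.gen j * u j := by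
        rw [kosD_apply, Finset.compl_empty]
        apply Finset.sum_congr rfl
        intro j _
        rw [Finset.filter_empty, Finset.card_empty, pow_zero, one_mul]
        have h1 : (insert j (∅ : Finset (Fin G.ngens))).card = 1 := by
          rw [Finset.card_insert_of_notMem (Finset.notMem_empty j), Finset.card_empty]
        rw [hf1 _ h1, Finset.sum_insert (Finset.notMem_empty j), Finset.sum_empty, add_zero]
      rw [hval, ← hwsum]
      exact hwI
    · rw [kosD_apply]
      apply Submodule.sum_mem
      intro j hj
      have hcard : (insert j t).card ≠ 1 := by
        rw [Finset.card_insert_of_notMem (Finset.mem_compl.mp hj)]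
        have := Finset.card_pos.mpr htne
        omega
      rw [hf0 _ hcard, mul_zero]
      exact Submodule.zero_mem _
  · rintro ⟨g, hg1, hg2⟩
    have hUl : ∀ l : Fin G.ngens, u l - kosD G g {l} ∈ Ideal.span T ^ n := by
      intro l
      have h := hg2 {l}
      rwa [hf1 {l} (Finset.card_singleton l), Finset.sum_singleton] at h
    have hzero : ∑ l, G.gen l * kosD G g {l} = 0 := by
      have h2 : ∑ l, G.gen l * kosD G g {l} = kosD G (kosD G g) ∅ := by
        rw [kosD_apply, Finset.compl_empty]
        apply Finset.sum_congr rfl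
        intro j _
        rw [Finset.filter_empty, Finset.card_empty, pow_zero, one_mul]
        rfl
      rw [h2, kosD_kosD, Pi.zero_apply]
    have hwRge : w ∈ G.Rge ((d : ℤ) * n + 1) := by
      have hsum2 : w = ∑ l, G.gen l * (u l - kosD G g {l}) := by
        have h3 : ∑ l, G.gen l * (u l - kosD G g {l}) =
            (∑ l, G.gen l * u l) - ∑ l, G.gen l * kosD G g {l} := by
          rw [← Finset.sum_sub_distrib]
          apply Finset.sum_congr rfl
          intro l _
          ring
        rw [h3, hzero, sub_zero, hwsum]
      rw [hsum2]
      apply Submodule.sum_mem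
      intro l _
      have h3 : u l - kosD G g {l} ∈ G.Rge ((d : ℤ) * n) := G.pow_le_Rge hT n (hUl l)
      have h4 := G.deg_mul_Rge (G.gen_mem l) h3
      rwa [show (1 + (d : ℤ) * n) = (d : ℤ) * n + 1 by ring] at h4
    have hdisj : Disjoint (G.deg ((d : ℤ) * n)) (G.Rge ((d : ℤ) * n + 1)) := by
      have hind := G.internal.submodule_iSupIndep ((d : ℤ) * n)
      refine hind.mono_right ?_
      refine iSup_le fun j => ?_
      exact le_iSup₂_of_le j.val (show j.val ≠ (d : ℤ) * n by have := j.2; omega) le_rfl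
    exact hw0 (Submodule.disjoint_def.mp hdisj w hwdeg hwRge)

theorem torNonzero_card_le {A B : Ideal R} {i : ℕ} {j : ℤ}
    (h : TorNonzero G A B i j) : i ≤ G.ngens := by
  by_contra hi
  obtain ⟨f, h1, _, h3⟩ := h
  apply h3
  refine ⟨0, fun s => ?_, fun s => ?_⟩
  · by_cases hc : s.card = i + 1
    · have hle : s.card ≤ G.ngens := by simpa using s.card_le_univ
      omega
    · rw [if_neg hc]
      rfl
  · rw [kosD_zero, Pi.zero_apply, sub_zero]
    have h4 := h1 s
    have hle : s.card ≤ G.ngens := by simpa using s.card_le_univ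
    rw [if_neg (by omega : ¬ s.card = i)] at h4
    rw [h4]
    exact B.zero_mem

theorem bddAbove_torSet (A B : Ideal R)
    (hA : ∀ (m : ℤ) (x : R), x ∈ A → G.proj m x ∈ A)
    (hB : ∀ (m : ℤ) (x : R), x ∈ B → G.proj m x ∈ B) :
    BddAbove {e : ℤ | ∃ (i : ℕ) (j : ℤ), e = j - (i : ℤ) ∧ TorNonzero G A B i j} := by
  have hfin : (⋃ i ∈ Finset.range (G.ngens + 1),
      (fun j : ℤ => j - (i : ℤ)) '' {j : ℤ | TorNonzero G A B i j}).Finite := by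
    apply Set.Finite.biUnion (Finset.range (G.ngens + 1)).finite_toSet
    intro i _
    exact (G.torNonzero_finite A B hA hB i).image _
  apply Set.Finite.bddAbove
  apply hfin.subset
  rintro e ⟨i, j, rfl, h⟩
  apply Set.mem_biUnion (show i ∈ ↑(Finset.range (G.ngens + 1)) from ?_)
  · exact ⟨j, h, rfl⟩
  · rw [Finset.mem_coe, Finset.mem_range]
    exact Nat.lt_succ_of_le (G.torNonzero_card_le h)

end Witness

end StdGraded

/-- If `I` is generated by forms of a single degree `d` and `ht I > 0` (equivalently,
`I` is contained in no minimal prime of `R`), then `reg Iⁿ⁻¹/Iⁿ ≥ d·n - 1` for all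
`n ≥ 1`. -/
theorem stmt1 (G : StdGraded k R) (I : Ideal R) (d : ℕ) (hd : 1 ≤ d)
    (hgen : GeneratedInDegree G d I) (hproper : I ≠ ⊤)
    (hpow : ∀ n : ℕ, 1 ≤ n → I ^ n ≠ ⊥)
    (hht : ∀ p ∈ minimalPrimes R, ¬ I ≤ p) :
    ∀ n : ℕ, 1 ≤ n → (d : ℤ) * n - 1 ≤ reg G (I ^ (n - 1)) (I ^ n) := by
  intro n hn
  obtain ⟨T, hTsub, hI⟩ := hgen
  subst hI
  unfold reg
  apply le_csSup
  · exact G.bddAbove_torSet (Ideal.span T ^ (n - 1)) (Ideal.span T ^ n)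
      (fun m x hx => G.proj_mem_pow hTsub (n - 1) hx m)
      (fun m x hx => G.proj_mem_pow hTsub n hx m)
  · exact ⟨1, (d : ℤ) * n, by push_cast; ring,
      G.torNonzero_witness hd hn hTsub (hpow n hn)⟩
end

section
/- Let {c_n}_{n≥0} be a weakly decreasing sequence of positive integers and d ≥ 1 an integer. Let m be the minimum integer such that c_n = c_m for all n > m. Let S = k[x,y] be a polynomial ring over a field k, Q = (x^{c_0}, x^{c_1} y^d, ..., x^{c_m} y^{dm}), R = S/Q and I = (y^d, Q)/Q. Then reg I^n/I^{n+1} = d(n+1) + c_n − 2 for all n ≥ 0. -/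
variable {k R : Type} [Field k] [CommRing R] [Algebra k R]

open MvPolynomial Finsupp

namespace St3

variable {k : Type} [Field k]

/-- exponent vector (a, b) -/
noncomputable def eb (a b : ℕ) : Fin 2 →₀ ℕ := Finsupp.single 0 a + Finsupp.single 1 b

lemma eb_apply0 (a b : ℕ) : eb a b 0 = a := by simp [eb]
lemma eb_apply1 (a b : ℕ) : eb a b 1 = b := by simp [eb, Finsupp.single_apply]

lemma eb_le_iff (a b : ℕ) (μ : Fin 2 →₀ ℕ) : eb a b ≤ μ ↔ a ≤ μ 0 ∧ b ≤ μ 1 := by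
  rw [Finsupp.le_def, Fin.forall_fin_two]
  simp [eb, Finsupp.single_apply]

lemma single1_le_iff (b : ℕ) (μ : Fin 2 →₀ ℕ) :
    Finsupp.single (1 : Fin 2) b ≤ μ ↔ b ≤ μ 1 := Finsupp.single_le_iff

lemma X_pow_mul_X_pow (a b : ℕ) :
    (X 0 : MvPolynomial (Fin 2) k) ^ a * X 1 ^ b = monomial (eb a b) 1 := by
  rw [X_pow_eq_monomial, X_pow_eq_monomial, monomial_mul, one_mul]; rfl

lemma degree_fin2 (μ : Fin 2 →₀ ℕ) : μ.degree = μ 0 + μ 1 := by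
  rw [Finsupp.degree_apply,
    Finset.sum_subset (Finset.subset_univ _) (by intro i _ h; simpa using h)]
  exact Fin.sum_univ_two μ

lemma eb_degree (a b : ℕ) : (eb a b).degree = a + b := by
  rw [degree_fin2, eb_apply0, eb_apply1]

variable (c : ℕ → ℕ) (d m : ℕ) (k)

/-- the generating exponents of `(x^{d t}) + Q` -/
def SA (t : ℕ) : Set (Fin 2 →₀ ℕ) :=
  insert (Finsupp.single 1 (d * t)) {s | ∃ i ≤ m, s = eb (c i) (d * i)}

/-- the ideal `(y^{d t}) + Q` in `S = k[x,y]` -/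
noncomputable def AS (t : ℕ) : Ideal (MvPolynomial (Fin 2) k) :=
  Ideal.span ((fun s => monomial s (1 : k)) '' SA c d m t)

lemma mem_AS {p : MvPolynomial (Fin 2) k} {t : ℕ} :
    p ∈ AS k c d m t ↔ ∀ μ ∈ p.support,
      d * t ≤ μ 1 ∨ ∃ i ≤ m, c i ≤ μ 0 ∧ d * i ≤ μ 1 := by
  rw [AS, mem_ideal_span_monomial_image]
  refine forall₂_congr fun μ _ => ?_
  constructor
  · rintro ⟨s, hs, hle⟩
    rcases hs with h | ⟨i, him, rfl⟩
    · subst h; left; exact (single1_le_iff _ _).mp hle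
    · right; exact ⟨i, him, (eb_le_iff _ _ _).mp hle⟩
  · rintro (h | ⟨i, him, h1, h2⟩)
    · exact ⟨_, Set.mem_insert _ _, (single1_le_iff _ _).mpr h⟩
    · exact ⟨_, Set.mem_insert_of_mem _ ⟨i, him, rfl⟩, (eb_le_iff _ _ _).mpr ⟨h1, h2⟩⟩

lemma AS_eq (t : ℕ) :
    AS k c d m t =
      Ideal.span {X 1 ^ (d * t)} ⊔
        Ideal.span {q : MvPolynomial (Fin 2) k | ∃ i ≤ m, q = X 0 ^ c i * X 1 ^ (d * i)} := by
  rw [AS, SA, Set.image_insert_eq, Ideal.span_insert]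
  congr 1
  · rw [show Finsupp.single (1:Fin 2) (d*t) = eb 0 (d*t) by simp [eb],
      ← X_pow_mul_X_pow 0 (d * t), pow_zero, one_mul]
  · congr 1
    ext q
    simp only [Set.mem_image, Set.mem_setOf_eq]
    constructor
    · rintro ⟨s, ⟨i, him, rfl⟩, rfl⟩; exact ⟨i, him, (X_pow_mul_X_pow _ _).symm⟩
    · rintro ⟨i, him, rfl⟩; exact ⟨_, ⟨i, him, rfl⟩, (X_pow_mul_X_pow _ _).symm⟩

end St3

namespace St3
variable {k : Type} [Field k]
variable {c : ℕ → ℕ} {d m : ℕ}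
  (hpos : ∀ n, 1 ≤ c n) (hdec : ∀ n, c (n + 1) ≤ c n) (hd : 1 ≤ d)
  (hm : ∀ n, m < n → c n = c m)

include hdec hm in
lemma exists_dvd_gen (n : ℕ) : ∃ i ≤ m, c i = c n ∧ d * i ≤ d * n := by
  refine ⟨min n m, min_le_right _ _, ?_, Nat.mul_le_mul_left d (min_le_left _ _)⟩
  rcases le_total n m with h | h
  · rw [min_eq_left h]
  · rw [min_eq_right h]
    rcases eq_or_lt_of_le h with rfl | h'
    · rfl
    · exact (hm n h').symm

lemma homog_support_degree {p : MvPolynomial (Fin 2) k} {E : ℕ}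
    (hp : p ∈ homogeneousSubmodule (Fin 2) k E) {μ : Fin 2 →₀ ℕ} (hμ : μ ∈ p.support) :
    μ 0 + μ 1 = E := by
  rw [← degree_fin2, Finsupp.degree_eq_weight_one]
  exact hp (MvPolynomial.mem_support_iff.mp hμ)

include hdec hm hd in
lemma keyUB {p : MvPolynomial (Fin 2) k} {E n : ℕ}
    (hE : d * n + d + c n ≤ E + 1)
    (hp : p ∈ homogeneousSubmodule (Fin 2) k E)
    (hpA : p ∈ AS k c d m n) : p ∈ AS k c d m (n + 1) := by
  rw [mem_AS] at hpA ⊢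
  intro μ hμ
  have hdeg := homog_support_degree hp hμ
  have hdd : d * (n + 1) = d * n + d := by ring
  rcases hpA μ hμ with h | h
  · by_cases h2 : d * n + d ≤ μ 1
    · left; omega
    · right
      obtain ⟨i, him, hci, hdi⟩ := exists_dvd_gen hdec hm (d := d) n
      exact ⟨i, him, by omega, by omega⟩
  · exact Or.inr h

lemma eb_add (a b a' b' : ℕ) : eb a b + eb a' b' = eb (a + a') (b + b') := by
  unfold eb
  rw [Finsupp.single_add, Finsupp.single_add]
  abel

lemma support_mono_eb (a b : ℕ) :
    (monomial (eb a b) (1 : k)).support = {eb a b} := by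
  classical
  rw [support_monomial, if_neg one_ne_zero]

include hpos hdec hd in
lemma keyNotMem (n : ℕ) :
    (monomial (eb (c n - 1) (d * n + d - 1)) (1 : k)) ∉ AS k c d m (n + 1) := by
  have anti : ∀ {i j : ℕ}, i ≤ j → c j ≤ c i := fun h => antitone_nat_of_succ_le hdec h
  rw [mem_AS]
  intro hcon
  have hsupp : eb (c n - 1) (d * n + d - 1) ∈
      (monomial (eb (c n - 1) (d * n + d - 1)) (1 : k)).support := by
    rw [support_mono_eb]; exact Finset.mem_singleton_self _
  rcases hcon _ hsupp with h | ⟨i, _, h1, h2⟩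
  · rw [eb_apply1] at h
    have hdd : d * (n + 1) = d * n + d := by ring
    omega
  · rw [eb_apply0] at h1
    rw [eb_apply1] at h2
    have hin : i ≤ n := by
      by_contra hc
      have : d * (n + 1) ≤ d * i := Nat.mul_le_mul_left d (by omega)
      have hdd : d * (n + 1) = d * n + d := by ring
      omega
    have := anti hin
    have := hpos n
    omega

include hpos hdec hd hm in
lemma keyX0 (n : ℕ) :
    (X 0 : MvPolynomial (Fin 2) k) * monomial (eb (c n - 1) (d * n + d - 1)) 1 ∈
      AS k c d m (n + 1) := by
  have hc := hpos n
  have : (X 0 : MvPolynomial (Fin 2) k) * monomial (eb (c n - 1) (d * n + d - 1)) 1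
      = monomial (eb (c n) (d * n + d - 1)) 1 := by
    rw [show (X 0 : MvPolynomial (Fin 2) k) = X 0 ^ 1 * X 1 ^ 0 by ring, X_pow_mul_X_pow,
      monomial_mul, one_mul, eb_add, show 1 + (c n - 1) = c n by omega,
      show 0 + (d * n + d - 1) = d * n + d - 1 by omega]
  rw [this, mem_AS]
  intro μ hμ
  rw [support_mono_eb, Finset.mem_singleton] at hμ
  subst hμ
  right
  obtain ⟨i, him, hci, hdi⟩ := exists_dvd_gen hdec hm (d := d) n
  rw [eb_apply0, eb_apply1]
  exact ⟨i, him, by omega, by omega⟩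

include hd in
lemma keyX1 (n : ℕ) :
    (X 1 : MvPolynomial (Fin 2) k) * monomial (eb (c n - 1) (d * n + d - 1)) 1 ∈
      AS k c d m (n + 1) := by
  have : (X 1 : MvPolynomial (Fin 2) k) * monomial (eb (c n - 1) (d * n + d - 1)) 1
      = monomial (eb (c n - 1) (d * n + d)) 1 := by
    rw [show (X 1 : MvPolynomial (Fin 2) k) = X 0 ^ 0 * X 1 ^ 1 by ring, X_pow_mul_X_pow,
      monomial_mul, one_mul, eb_add, show 0 + (c n - 1) = c n - 1 by omega,
      show 1 + (d * n + d - 1) = d * n + d by omega]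
  rw [this, mem_AS]
  intro μ hμ
  rw [support_mono_eb, Finset.mem_singleton] at hμ
  subst hμ
  left
  rw [eb_apply1]
  have hdd : d * (n + 1) = d * n + d := by ring
  omega

lemma hom1_mul_mem {h p : MvPolynomial (Fin 2) k} {J : Ideal (MvPolynomial (Fin 2) k)}
    (hh : h ∈ homogeneousSubmodule (Fin 2) k 1)
    (hX : ∀ i : Fin 2, X i * p ∈ J) : h * p ∈ J := by
  rw [← support_sum_monomial_coeff h, Finset.sum_mul]
  refine Ideal.sum_mem _ fun μ hμ => ?_
  have hdeg := homog_support_degree hh hμ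
  obtain ⟨i, rfl⟩ : ∃ i : Fin 2, μ = Finsupp.single i 1 := by
    have h0 : μ 0 = 1 ∧ μ 1 = 0 ∨ μ 0 = 0 ∧ μ 1 = 1 := by omega
    rcases h0 with ⟨ha, hb⟩ | ⟨ha, hb⟩
    · exact ⟨0, Finsupp.ext fun j => by fin_cases j <;> simp [Finsupp.single_apply, ha, hb]⟩
    · exact ⟨1, Finsupp.ext fun j => by fin_cases j <;> simp [Finsupp.single_apply, ha, hb]⟩
  have hrw : monomial (Finsupp.single i 1) (coeff (Finsupp.single i 1) h) * p
      = C (coeff (Finsupp.single i 1) h) * (X i * p) := by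
    rw [← mul_assoc]
    congr 1
    rw [show (X i : MvPolynomial (Fin 2) k) = monomial (Finsupp.single i 1) 1 from rfl,
      C_mul_monomial, mul_one]
  rw [hrw]
  exact Ideal.mul_mem_left _ _ (hX i)

end St3

set_option synthInstance.maxHeartbeats 1000000 in
set_option maxHeartbeats 1000000 in
open MvPolynomial in
/-- For a weakly decreasing sequence of positive integers `c` that stabilizes exactly at
index `m`, with `S = k[x,y]`, `Q = (x^{c_0}, x^{c_1}y^d, …, x^{c_m}y^{dm})`, `R = S/Q`
and `I = (y^d, Q)/Q`, one has `reg Iⁿ/Iⁿ⁺¹ = d(n+1) + cₙ - 2` for all `n ≥ 0`.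
(`G` is the standard grading that `R` inherits from `S`.) -/
theorem stmt3 (c : ℕ → ℕ) (hpos : ∀ n, 1 ≤ c n) (hdec : ∀ n, c (n + 1) ≤ c n)
    (d : ℕ) (hd : 1 ≤ d) (m : ℕ)
    (hm : ∀ n, m < n → c n = c m)
    (hmin : ∀ m' : ℕ, (∀ n, m' < n → c n = c m') → m ≤ m')
    (Q : Ideal (MvPolynomial (Fin 2) k))
    (hQ : Q = Ideal.span {q | ∃ i : ℕ, i ≤ m ∧ q = X 0 ^ c i * X 1 ^ (d * i)})
    (I : Ideal (MvPolynomial (Fin 2) k ⧸ Q))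
    (hI : I = Ideal.map (Ideal.Quotient.mk Q) (Ideal.span {X 1 ^ d}))
    (G : StdGraded k (MvPolynomial (Fin 2) k ⧸ Q))
    (hdeg : ∀ j : ℤ, G.deg j = Submodule.map (Ideal.Quotient.mkₐ k Q).toLinearMap
      (if 0 ≤ j then homogeneousSubmodule (Fin 2) k j.toNat else ⊥)) :
    ∀ n : ℕ, reg G (I ^ n) (I ^ (n + 1)) = (d : ℤ) * (n + 1) + c n - 2 := by
  classical
  intro n
  -- ideal membership in powers of I via monomial ideals upstairs
  have hQAS : ∀ t : ℕ, Ideal.span {(X 1 : MvPolynomial (Fin 2) k) ^ (d * t)} ⊔ Q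
      = St3.AS k c d m t := by
    intro t
    rw [St3.AS_eq, hQ]
  have hmemIt : ∀ (p : MvPolynomial (Fin 2) k) (t : ℕ),
      Ideal.Quotient.mk Q p ∈ I ^ t ↔ p ∈ St3.AS k c d m t := by
    intro p t
    rw [hI, ← Ideal.map_pow, Ideal.span_singleton_pow, ← pow_mul,
      Ideal.mem_quotient_iff_mem_sup, hQAS]
  have hdegmem : ∀ (r : MvPolynomial (Fin 2) k ⧸ Q) (e : ℤ), 0 ≤ e →
      (r ∈ G.deg e ↔ ∃ p ∈ homogeneousSubmodule (Fin 2) k e.toNat,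
        Ideal.Quotient.mk Q p = r) := by
    intro r e he
    rw [hdeg, if_pos he]
    simp [Submodule.mem_map, Ideal.Quotient.mkₐ_eq_mk]
  -- the numerology
  set N : ℕ := d * (n + 1) + c n - 2 with hNdef
  have hdd : d * (n + 1) = d * n + d := by ring
  have hdn : d ≤ d * (n + 1) := Nat.le_mul_of_pos_right d (by omega)
  have hN2 : 2 ≤ d * (n + 1) + c n := by have := hpos n; omega
  have hNcast : ((N : ℕ) : ℤ) = (d : ℤ) * (n + 1) + c n - 2 := by
    rw [hNdef, Nat.cast_sub hN2]
    push_cast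
    ring
  -- the socle element
  set up : MvPolynomial (Fin 2) k := monomial (St3.eb (c n - 1) (d * n + d - 1)) 1 with hupdef
  set u : MvPolynomial (Fin 2) k ⧸ Q := Ideal.Quotient.mk Q up with hudef
  have hup_hom : up ∈ homogeneousSubmodule (Fin 2) k N := by
    refine isHomogeneous_monomial _ ?_
    rw [St3.eb_degree]
    have := hpos n
    omega
  have huA : u ∈ I ^ n := by
    rw [hudef, hmemIt, St3.mem_AS]
    intro μ hμ
    rw [hupdef, St3.support_mono_eb, Finset.mem_singleton] at hμ
    subst hμ
    left
    rw [St3.eb_apply1]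
    omega
  have huB : u ∉ I ^ (n + 1) := by
    intro hcon
    exact St3.keyNotMem hpos hdec hd n ((hmemIt _ _).mp hcon)
  have hu_degN : u ∈ G.deg (N : ℤ) := by
    rw [hdegmem _ _ (Int.natCast_nonneg N)]
    exact ⟨up, by simpa using hup_hom, rfl⟩
  have hugen : ∀ i0 : Fin G.ngens, G.gen i0 * u ∈ I ^ (n + 1) := by
    intro i0
    have hg := G.gen_mem i0
    rw [hdegmem _ 1 (by norm_num)] at hg
    obtain ⟨h, hh, hhg⟩ := hg
    rw [← hhg, hudef, ← map_mul, hmemIt]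
    refine St3.hom1_mul_mem (by simpa using hh) ?_
    intro i
    fin_cases i
    · exact St3.keyX0 hpos hdec hd hm n
    · exact St3.keyX1 hd n
  -- vanishing above degree N
  have hvanish : ∀ (r : MvPolynomial (Fin 2) k ⧸ Q) (e : ℤ), (N : ℤ) < e →
      r ∈ G.deg e → r ∈ I ^ n → r ∈ I ^ (n + 1) := by
    intro r e hlt hre hrA
    have he0 : 0 ≤ e := le_trans (Int.natCast_nonneg N) hlt.le
    obtain ⟨p, hp, rfl⟩ := (hdegmem r e he0).mp hre
    rw [hmemIt] at hrA ⊢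
    refine St3.keyUB hdec hd hm (E := e.toNat) ?_ hp hrA
    omega
  -- the nonzero Tor class in homological degree ngens
  have hTor : TorNonzero G (I ^ n) (I ^ (n + 1)) G.ngens ((N : ℤ) + G.ngens) := by
    refine ⟨fun s => if s = Finset.univ then u else 0, ?_, ?_, ?_⟩
    · intro s
      dsimp only
      by_cases hs : s.card = G.ngens
      · rw [if_pos hs, if_pos (Finset.eq_univ_of_card s (by simpa using hs))]
        refine ⟨huA, ?_⟩
        rw [show (N : ℤ) + G.ngens - G.ngens = (N : ℤ) by ring]
        exact hu_degN
      · rw [if_neg hs, if_neg (fun hsu => hs (by rw [hsu]; simp))]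
    · intro t
      rw [kosD]
      refine Ideal.sum_mem _ fun j' _ => ?_
      by_cases hins : insert j' t = Finset.univ
      · rw [if_pos hins, mul_assoc]
        exact Ideal.mul_mem_left _ _ (hugen j')
      · rw [if_neg hins, mul_zero]
        exact zero_mem _
    · rintro ⟨g, hg1, hg2⟩
      have hg0 : ∀ s, g s = 0 := by
        intro s
        have hcard : s.card ≠ G.ngens + 1 := by
          have := Finset.card_le_univ s
          simp only [Finset.card_univ, Fintype.card_fin] at this
          omega
        have := hg1 s
        rwa [if_neg hcard] at this
      have hk : kosD G g Finset.univ = 0 := by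
        rw [kosD]
        simp [hg0]
      have := hg2 Finset.univ
      dsimp only at this
      rw [if_pos rfl, hk, sub_zero] at this
      exact huB this
  -- compute the sup
  rw [reg, ← hNcast]
  have hub : ∀ e ∈ {e : ℤ | ∃ (i : ℕ) (j : ℤ), e = j - (i : ℤ) ∧
      TorNonzero G (I ^ n) (I ^ (n + 1)) i j}, e ≤ (N : ℤ) := by
    rintro e ⟨i, j, rfl, f, h1, h2, h3⟩
    by_contra hgt
    push_neg at hgt
    apply h3
    refine ⟨fun _ => 0, ?_, ?_⟩
    · intro s
      by_cases hs : s.card = i + 1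
      · rw [if_pos hs]
        exact ⟨zero_mem _, zero_mem _⟩
      · rw [if_neg hs]
    · intro s
      have hk : kosD G (fun _ => 0) s = 0 := by
        rw [kosD]; simp
      rw [hk, sub_zero]
      have h1s := h1 s
      by_cases hs : s.card = i
      · rw [if_pos hs] at h1s
        exact hvanish _ (j - i) hgt h1s.2 h1s.1
      · rw [if_neg hs] at h1s
        rw [h1s]
        exact zero_mem _
  have hmem : (N : ℤ) ∈ {e : ℤ | ∃ (i : ℕ) (j : ℤ), e = j - (i : ℤ) ∧
      TorNonzero G (I ^ n) (I ^ (n + 1)) i j} :=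
    ⟨G.ngens, (N : ℤ) + G.ngens, by ring, hTor⟩
  exact le_antisymm (csSup_le ⟨(N : ℤ), hmem⟩ hub) (le_csSup ⟨(N : ℤ), hub⟩ hmem)
end

section
/- Let S = k[x_1, x_2, y_1, ..., y_m] over a field k, P = (y_1, ..., y_m), d ≥ 1 and c a positive integer. Let E and F be ideals generated by monomials of degree dn in y_1, ..., y_m such that E·P^{d−1} is not contained in F. Then reg P^{dn}/(x_1 P^{dn}, x_2^c E, F, P^{d(n+1)}) = d(n+1) + c − 2. -/
variable {k R : Type} [Field k] [CommRing R] [Algebra k R]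

set_option maxHeartbeats 1000000


open MvPolynomial Finset

section Helpers
variable {k : Type} [Field k] {m : ℕ}

/-- y-degree of an exponent vector. -/
def ydeg {m : ℕ} (α : Fin (m + 2) →₀ ℕ) : ℕ := ∑ i : Fin m, α i.succ.succ

lemma ydeg_add (α β : Fin (m + 2) →₀ ℕ) : ydeg (α + β) = ydeg α + ydeg β := by
  simp [ydeg, Finsupp.add_apply, Finset.sum_add_distrib]

lemma fin_two_cases (j : Fin (m + 2)) : j = 0 ∨ j = 1 ∨ ∃ i : Fin m, j = i.succ.succ := by
  induction j using Fin.cases with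
  | zero => exact Or.inl rfl
  | succ j =>
    induction j using Fin.cases with
    | zero => exact Or.inr (Or.inl (by simp [Fin.succ_zero_eq_one]))
    | succ i => exact Or.inr (Or.inr ⟨i, rfl⟩)

lemma succ_succ_ne_zero (i : Fin m) : (i.succ.succ : Fin (m + 2)) ≠ 0 := Fin.succ_ne_zero _

lemma succ_succ_ne_one (i : Fin m) : (i.succ.succ : Fin (m + 2)) ≠ 1 := by
  rw [← Fin.succ_zero_eq_one]
  intro h
  exact Fin.succ_ne_zero i (Fin.succ_injective _ h)

lemma degree_single (j : Fin (m + 2)) (c : ℕ) : Finsupp.degree (Finsupp.single j c) = c := by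
  rcases eq_or_ne c 0 with rfl | hc
  · simp
  · rw [Finsupp.degree_apply, Finsupp.support_single_ne_zero _ hc, Finset.sum_singleton,
      Finsupp.single_eq_same]

lemma degree_add (α β : Fin (m + 2) →₀ ℕ) :
    Finsupp.degree (α + β) = Finsupp.degree α + Finsupp.degree β := by
  simp only [Finsupp.degree_eq_weight_one, map_add]

lemma degree_split (α : Fin (m + 2) →₀ ℕ) :
    Finsupp.degree α = α 0 + α 1 + ydeg α := by
  have h : Finsupp.degree α = ∑ j : Fin (m + 2), α j := by
    rw [Finsupp.degree]
    exact Finset.sum_subset (Finset.subset_univ _)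
      (fun x _ hx => Finsupp.notMem_support_iff.mp hx)
  rw [h, Fin.sum_univ_succ, Fin.sum_univ_succ]
  simp [ydeg, Fin.succ_zero_eq_one, add_assoc]

lemma ydeg_le_degree (α : Fin (m + 2) →₀ ℕ) : ydeg α ≤ Finsupp.degree α := by
  rw [degree_split]; omega

/-- exponent vector of a pure y-monomial. -/
noncomputable def ya {m : ℕ} (a : Fin m → ℕ) : Fin (m + 2) →₀ ℕ :=
  ∑ i : Fin m, Finsupp.single i.succ.succ (a i)

lemma ya_apply_zero (a : Fin m → ℕ) : ya a 0 = 0 := by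
  simp only [ya, Finsupp.finset_sum_apply]
  exact Finset.sum_eq_zero fun i _ => Finsupp.single_eq_of_ne' (Fin.succ_ne_zero _)

lemma ya_apply_one (a : Fin m → ℕ) : ya a 1 = 0 := by
  simp only [ya, Finsupp.finset_sum_apply]
  exact Finset.sum_eq_zero fun i _ => Finsupp.single_eq_of_ne' (succ_succ_ne_one i)

lemma ya_apply_succ (a : Fin m → ℕ) (i : Fin m) : ya a i.succ.succ = a i := by
  simp only [ya, Finsupp.finset_sum_apply]
  rw [Finset.sum_eq_single i]
  · simp
  · intro b _ hb
    exact Finsupp.single_eq_of_ne' (fun h => hb (Fin.succ_injective _ (Fin.succ_injective _ h)))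
  · intro h; exact absurd (Finset.mem_univ i) h

lemma degree_sum' {ι : Type*} (s : Finset ι) (g : ι → (Fin (m + 2) →₀ ℕ)) :
    Finsupp.degree (∑ i ∈ s, g i) = ∑ i ∈ s, Finsupp.degree (g i) := by
  simp only [Finsupp.degree_eq_weight_one, map_sum]

lemma degree_ya (a : Fin m → ℕ) : Finsupp.degree (ya a) = ∑ i, a i := by
  rw [ya, degree_sum']
  exact Finset.sum_congr rfl fun i _ => degree_single _ _

lemma ydeg_ya (a : Fin m → ℕ) : ydeg (ya a) = ∑ i, a i := by
  have := degree_split (ya a)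
  rw [ya_apply_zero, ya_apply_one, degree_ya] at this
  omega

lemma prod_X_pow (a : Fin m → ℕ) :
    (∏ i, (X i.succ.succ : MvPolynomial (Fin (m + 2)) k) ^ a i) = monomial (ya a) 1 := by
  classical
  rw [ya]
  induction (Finset.univ : Finset (Fin m)) using Finset.induction with
  | empty => simp
  | insert _ _ hx ih =>
    rw [Finset.prod_insert hx, Finset.sum_insert hx, ih, X_pow_eq_monomial, monomial_mul, one_mul]

/-- ideal of polynomials all of whose exponents satisfy an up-closed predicate. -/
def predIdeal (Q : (Fin (m + 2) →₀ ℕ) → Prop) (hQ : ∀ γ δ, Q δ → Q (γ + δ)) :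
    Ideal (MvPolynomial (Fin (m + 2)) k) where
  carrier := {p | ∀ α ∈ p.support, Q α}
  zero_mem' := by simp
  add_mem' := by
    intro a b ha hb α hα
    classical
    rcases Finset.mem_union.mp (Finsupp.support_add hα) with h | h
    · exact ha α h
    · exact hb α h
  smul_mem' := by
    intro r p hp α hα
    classical
    rw [smul_eq_mul] at hα
    obtain ⟨γ, _, δ, hδ, rfl⟩ := Finset.mem_add.mp (MvPolynomial.support_mul r p hα)
    exact hQ γ δ (hp δ hδ)

lemma mem_predIdeal {Q hQ} {p : MvPolynomial (Fin (m + 2)) k} :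
    p ∈ predIdeal Q hQ ↔ ∀ α ∈ p.support, Q α := Iff.rfl

lemma mem_support_mul {p q : MvPolynomial (Fin (m + 2)) k} {α}
    (hα : α ∈ (p * q).support) : ∃ γ ∈ p.support, ∃ δ ∈ q.support, γ + δ = α := by
  classical
  exact Finset.mem_add.mp (MvPolynomial.support_mul p q hα)

lemma finsupp_exists_between (δ : Fin (m + 2) →₀ ℕ) (w : ℕ) :
    ∀ σ : Fin (m + 2) →₀ ℕ, σ ≤ δ → Finsupp.degree σ ≤ w → w ≤ Finsupp.degree δ →
    ∃ ρ, σ ≤ ρ ∧ ρ ≤ δ ∧ Finsupp.degree ρ = w := by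
  suffices H : ∀ (t : ℕ) (σ : Fin (m + 2) →₀ ℕ), σ ≤ δ → Finsupp.degree σ + t = w →
      w ≤ Finsupp.degree δ → ∃ ρ, σ ≤ ρ ∧ ρ ≤ δ ∧ Finsupp.degree ρ = w by
    intro σ h1 h2 h3
    exact H (w - Finsupp.degree σ) σ h1 (by omega) h3
  intro t
  induction t with
  | zero => intro σ h1 h2 _; exact ⟨σ, le_refl _, h1, by omega⟩
  | succ t ih =>
    intro σ h1 h2 h3
    have hσδ : Finsupp.degree σ < Finsupp.degree δ := by omega
    have : ∃ j, σ j < δ j := by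
      by_contra hc
      push_neg at hc
      have : σ = δ := le_antisymm h1 (fun j => hc j)
      rw [this] at hσδ; omega
    obtain ⟨j, hj⟩ := this
    have hle : σ + Finsupp.single j 1 ≤ δ := by
      intro i
      rcases eq_or_ne i j with rfl | hij
      · simp only [Finsupp.add_apply, Finsupp.single_eq_same]; omega
      · simp only [Finsupp.add_apply, Finsupp.single_eq_of_ne' (Ne.symm hij), add_zero]
        exact h1 i
    obtain ⟨ρ, hρ1, hρ2, hρ3⟩ := ih (σ + Finsupp.single j 1) hle
      (by rw [degree_add, degree_single]; omega) h3
    exact ⟨ρ, le_trans (le_add_of_nonneg_right zero_le) hρ1, hρ2, hρ3⟩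

end Helpers

open MvPolynomial Finset

section Ppow
variable (k : Type) [Field k] (m : ℕ)

noncomputable def Pideal : Ideal (MvPolynomial (Fin (m + 2)) k) :=
  Ideal.span (Set.range fun i : Fin m => (X i.succ.succ : MvPolynomial (Fin (m + 2)) k))

variable {k m}

lemma ydeg_up (w : ℕ) : ∀ γ δ : Fin (m + 2) →₀ ℕ, w ≤ ydeg δ → w ≤ ydeg (γ + δ) :=
  fun γ δ h => by rw [ydeg_add]; omega

lemma ydeg_single_succ (i : Fin m) (c : ℕ) : ydeg (Finsupp.single i.succ.succ c) = c := by
  have h := degree_split (Finsupp.single (i.succ.succ : Fin (m+2)) c)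
  rw [degree_single, Finsupp.single_eq_of_ne' (succ_succ_ne_zero i),
    Finsupp.single_eq_of_ne' (succ_succ_ne_one i)] at h
  omega

lemma monomial_mem_P_pow : ∀ (w : ℕ) (α : Fin (m + 2) →₀ ℕ), w ≤ ydeg α →
    (monomial α (1 : k)) ∈ (Pideal k m) ^ w := by
  intro w
  induction w with
  | zero => intro α _; simp
  | succ w ih =>
    intro α hα
    have : ∃ i : Fin m, 0 < α i.succ.succ := by
      by_contra hc
      push_neg at hc
      have : ydeg α = 0 := Finset.sum_eq_zero fun i _ => by have := hc i; omega
      omega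
    obtain ⟨i, hi⟩ := this
    have hle : Finsupp.single (i.succ.succ : Fin (m+2)) 1 ≤ α :=
      Finsupp.single_le_iff.mpr hi
    set α' := α - Finsupp.single (i.succ.succ : Fin (m+2)) 1 with hα'
    have hsum : Finsupp.single (i.succ.succ : Fin (m+2)) 1 + α' = α :=
      add_tsub_cancel_of_le hle
    have hyd : ydeg α = 1 + ydeg α' := by
      rw [← hsum, ydeg_add, ydeg_single_succ]
    have hmem : (monomial α' (1 : k)) ∈ (Pideal k m) ^ w := ih α' (by omega)
    have heq : (X (i.succ.succ : Fin (m+2)) : MvPolynomial (Fin (m+2)) k) *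
        monomial α' 1 = monomial α 1 := by
      rw [X, monomial_mul, one_mul, hsum]
    rw [← heq, pow_succ']
    exact Ideal.mul_mem_mul (Ideal.subset_span ⟨i, rfl⟩) hmem

lemma P_le_pred : (Pideal k m) ≤ predIdeal (fun α => 1 ≤ ydeg α) (ydeg_up 1) := by
  rw [Pideal, Ideal.span_le]
  rintro _ ⟨i, rfl⟩
  intro α hα
  rw [MvPolynomial.support_X, Finset.mem_singleton] at hα
  subst hα
  simp only [ydeg_single_succ, le_refl]

lemma P_pow_le_pred : ∀ w : ℕ, (Pideal k m) ^ w ≤ predIdeal (fun α => w ≤ ydeg α) (ydeg_up w) := by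
  intro w
  induction w with
  | zero => intro p _ α _; exact Nat.zero_le _
  | succ w ih =>
    rw [pow_succ]
    refine Ideal.mul_le.mpr fun r hr s hs => ?_
    intro α hα
    obtain ⟨γ, hγ, δ, hδ, rfl⟩ := mem_support_mul hα
    have h1 := ih hr γ hγ
    have h2 := P_le_pred hs δ hδ
    rw [ydeg_add]
    simp only at h1 h2
    omega

end Ppow

open MvPolynomial Finset

section Bideal
variable {k : Type} [Field k] {m : ℕ}

/-- `Qe TE α` : the monomial `X^α` is divisible by a generator from `TE`. -/
def Qe (TE : Set (MvPolynomial (Fin (m + 2)) k)) (α : Fin (m + 2) →₀ ℕ) : Prop :=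
  ∃ σ, monomial σ (1 : k) ∈ TE ∧ σ ≤ α

lemma Qe_up (TE : Set (MvPolynomial (Fin (m + 2)) k)) :
    ∀ γ δ, Qe TE δ → Qe TE (γ + δ) := by
  rintro γ δ ⟨σ, h1, h2⟩
  exact ⟨σ, h1, le_trans h2 (le_add_of_nonneg_left zero_le)⟩

variable {d cc n : ℕ} {TE TF : Set (MvPolynomial (Fin (m + 2)) k)}

/-- monomial membership predicate cutting out `B`. -/
def Dpred (d cc n : ℕ) (TE TF : Set (MvPolynomial (Fin (m + 2)) k))
    (α : Fin (m + 2) →₀ ℕ) : Prop :=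
  (1 ≤ α 0 ∧ d * n ≤ ydeg α) ∨ (cc ≤ α 1 ∧ Qe TE α) ∨ Qe TF α ∨ d * (n + 1) ≤ ydeg α

lemma Dpred_up : ∀ γ δ, Dpred d cc n TE TF δ → Dpred d cc n TE TF (γ + δ) := by
  rintro γ δ (⟨h1, h2⟩ | ⟨h1, h2⟩ | h | h)
  · exact Or.inl ⟨by simp only [Finsupp.add_apply]; omega, by rw [ydeg_add]; omega⟩
  · exact Or.inr (Or.inl ⟨by simp only [Finsupp.add_apply]; omega, Qe_up TE γ δ h2⟩)
  · exact Or.inr (Or.inr (Or.inl (Qe_up TF γ δ h)))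
  · exact Or.inr (Or.inr (Or.inr (by rw [ydeg_add]; omega)))

/-- the denominator ideal. -/
noncomputable def Bideal (d cc n : ℕ) (TE TF : Set (MvPolynomial (Fin (m + 2)) k)) :
    Ideal (MvPolynomial (Fin (m + 2)) k) :=
  Ideal.span {X (0 : Fin (m + 2))} * (Pideal k m) ^ (d * n) ⊔
    Ideal.span {X (1 : Fin (m + 2)) ^ cc} * Ideal.span TE ⊔ Ideal.span TF ⊔
    (Pideal k m) ^ (d * (n + 1))

/-- structure of the generators of TE/TF. -/
def GoodGens (w : ℕ) (T : Set (MvPolynomial (Fin (m + 2)) k)) : Prop :=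
  ∀ q ∈ T, ∃ a : Fin m → ℕ, (∑ i, a i) = w ∧ q = ∏ i, X i.succ.succ ^ a i

lemma goodGens_spec {w : ℕ} {T : Set (MvPolynomial (Fin (m + 2)) k)} (hT : GoodGens w T)
    {q} (hq : q ∈ T) : ∃ σ, q = monomial σ (1 : k) ∧ σ 0 = 0 ∧ σ 1 = 0 ∧
      ydeg σ = w ∧ Finsupp.degree σ = w := by
  obtain ⟨a, ha, rfl⟩ := hT q hq
  refine ⟨ya a, prod_X_pow a, ya_apply_zero a, ya_apply_one a, ?_, ?_⟩
  · rw [ydeg_ya, ha]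
  · rw [degree_ya, ha]

lemma goodGens_exp_spec {w : ℕ} {T : Set (MvPolynomial (Fin (m + 2)) k)} (hT : GoodGens w T)
    {σ} (hσ : monomial σ (1 : k) ∈ T) : σ 0 = 0 ∧ σ 1 = 0 ∧
      ydeg σ = w ∧ Finsupp.degree σ = w := by
  obtain ⟨σ', heq, h0, h1, h2, h3⟩ := goodGens_spec hT hσ
  have : σ = σ' := by
    have := (MvPolynomial.monomial_eq_monomial_iff σ σ' (1 : k) 1).mp heq
    rcases this with ⟨h, _⟩ | ⟨h, _⟩
    · exact h
    · exact absurd h one_ne_zero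
  rw [this]; exact ⟨h0, h1, h2, h3⟩

lemma mem_B_1 {x : MvPolynomial (Fin (m + 2)) k}
    (h : x ∈ Ideal.span {X (0 : Fin (m + 2))} * (Pideal k m) ^ (d * n)) :
    x ∈ Bideal d cc n TE TF :=
  Submodule.mem_sup_left (Submodule.mem_sup_left (Submodule.mem_sup_left h))

lemma mem_B_2 {x : MvPolynomial (Fin (m + 2)) k}
    (h : x ∈ Ideal.span {X (1 : Fin (m + 2)) ^ cc} * Ideal.span TE) :
    x ∈ Bideal d cc n TE TF :=
  Submodule.mem_sup_left (Submodule.mem_sup_left (Submodule.mem_sup_right h))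

lemma mem_B_3 {x : MvPolynomial (Fin (m + 2)) k} (h : x ∈ Ideal.span TF) :
    x ∈ Bideal d cc n TE TF :=
  Submodule.mem_sup_left (Submodule.mem_sup_right h)

lemma mem_B_4 {x : MvPolynomial (Fin (m + 2)) k} (h : x ∈ (Pideal k m) ^ (d * (n + 1))) :
    x ∈ Bideal d cc n TE TF :=
  Submodule.mem_sup_right h

/-- generators satisfying `Dpred` generate inside `Bideal`. -/
lemma monomial_mem_B_of_D (hTE : GoodGens (d * n) TE) (c0 : k)
    {α} (hD : Dpred d cc n TE TF α) : monomial α c0 ∈ Bideal d cc n TE TF := by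
  have h1 : monomial α (1 : k) ∈ Bideal d cc n TE TF := by
    rcases hD with ⟨h1, h2⟩ | ⟨h1, h2⟩ | h | h
    · -- x1 * P^{dn}
      have hle : Finsupp.single (0 : Fin (m + 2)) 1 ≤ α := Finsupp.single_le_iff.mpr h1
      have heq : (X (0 : Fin (m + 2)) : MvPolynomial (Fin (m + 2)) k) *
          monomial (α - Finsupp.single 0 1) 1 = monomial α 1 := by
        rw [X, monomial_mul, one_mul, add_tsub_cancel_of_le hle]
      have hyd : ydeg (α - Finsupp.single (0 : Fin (m+2)) 1) = ydeg α := by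
        conv_rhs => rw [← add_tsub_cancel_of_le hle]
        rw [ydeg_add]
        have : ydeg (Finsupp.single (0 : Fin (m+2)) 1) = 0 := by
          have h := degree_split (Finsupp.single (0 : Fin (m+2)) 1)
          rw [degree_single] at h
          simp only [Finsupp.single_eq_same,
            Finsupp.single_eq_of_ne (by norm_num : (0 : Fin (m+2)) ≠ 1)] at h
          omega
        omega
      rw [← heq]
      exact mem_B_1 (Ideal.mul_mem_mul (Ideal.mem_span_singleton_self _)
        (monomial_mem_P_pow (d * n) _ (by omega)))
    · -- x2^cc * E
      obtain ⟨σ, hσT, hσle⟩ := h2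
      obtain ⟨hσ0, hσ1, hσy, hσd⟩ := goodGens_exp_spec hTE hσT
      have hle : Finsupp.single (1 : Fin (m + 2)) cc + σ ≤ α := by
        intro j
        rcases eq_or_ne j 1 with rfl | hj
        · simp only [Finsupp.add_apply, Finsupp.single_eq_same, hσ1]; omega
        · simp only [Finsupp.add_apply, Finsupp.single_eq_of_ne' (Ne.symm hj), zero_add]
          exact hσle j
      have heq : ((X (1 : Fin (m + 2)) : MvPolynomial (Fin (m + 2)) k) ^ cc *
          monomial σ 1) * monomial (α - (Finsupp.single 1 cc + σ)) 1 = monomial α 1 := by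
        rw [X_pow_eq_monomial, monomial_mul, monomial_mul, one_mul, one_mul,
          add_tsub_cancel_of_le hle]
      rw [← heq]
      exact mem_B_2 (Ideal.mul_mem_right _ _
        (Ideal.mul_mem_mul (Ideal.mem_span_singleton_self _) (Ideal.subset_span hσT)))
    · -- F
      obtain ⟨σ, hσT, hσle⟩ := h
      have heq : (monomial σ (1 : k)) * monomial (α - σ) 1 = monomial α 1 := by
        rw [monomial_mul, one_mul, add_tsub_cancel_of_le hσle]
      rw [← heq]
      exact mem_B_3 (Ideal.mul_mem_right _ _ (Ideal.subset_span hσT))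
    · exact mem_B_4 (monomial_mem_P_pow _ _ h)
  have : monomial α c0 = C c0 * monomial α 1 := by rw [C_mul_monomial, mul_one]
  rw [this]
  exact Ideal.mul_mem_left _ _ h1

end Bideal

section BAnalysis
variable {k : Type} [Field k] {m : ℕ} {d cc n : ℕ} {TE TF : Set (MvPolynomial (Fin (m + 2)) k)}

lemma support_monomial_one (σ : Fin (m + 2) →₀ ℕ) :
    (monomial σ (1 : k)).support = {σ} := by
  classical
  rw [support_monomial, if_neg (one_ne_zero : (1:k) ≠ 0)]

lemma E_le_predQe (hTE : GoodGens (d * n) TE) :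
    Ideal.span TE ≤ predIdeal (fun α => Qe TE α ∧ d * n ≤ ydeg α)
      (fun γ δ h => ⟨Qe_up TE γ δ h.1, by rw [ydeg_add]; omega⟩) := by
  rw [Ideal.span_le]
  intro q hq
  obtain ⟨σ, rfl, _, _, hy, _⟩ := goodGens_spec hTE hq
  intro α hα
  rw [support_monomial_one, Finset.mem_singleton] at hα
  subst hα
  exact ⟨⟨_, hq, le_refl _⟩, by omega⟩

lemma ydeg_single_zero (c : ℕ) : ydeg (Finsupp.single (0 : Fin (m + 2)) c) = 0 := by
  have h := degree_split (Finsupp.single (0 : Fin (m+2)) c)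
  rw [degree_single, Finsupp.single_eq_same,
    Finsupp.single_eq_of_ne' (by norm_num : (0 : Fin (m+2)) ≠ 1)] at h
  omega

lemma ydeg_single_one' (c : ℕ) : ydeg (Finsupp.single (1 : Fin (m + 2)) c) = 0 := by
  have h := degree_split (Finsupp.single (1 : Fin (m+2)) c)
  rw [degree_single, Finsupp.single_eq_same,
    Finsupp.single_eq_of_ne' (by norm_num : (1 : Fin (m+2)) ≠ 0)] at h
  omega

lemma B_le_predD (hTE : GoodGens (d * n) TE) (hTF : GoodGens (d * n) TF) :
    Bideal d cc n TE TF ≤ predIdeal (Dpred d cc n TE TF) Dpred_up := by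
  refine sup_le (sup_le (sup_le ?_ ?_) ?_) ?_
  · refine Ideal.mul_le.mpr fun r hr s hs => ?_
    obtain ⟨t, rfl⟩ := Ideal.mem_span_singleton.mp hr
    intro α hα
    rw [mul_comm (X 0) t, mul_assoc] at hα
    obtain ⟨γ, hγ, δ, hδ, rfl⟩ := mem_support_mul hα
    obtain ⟨ε, hε, δ', hδ', rfl⟩ := mem_support_mul hδ
    rw [MvPolynomial.support_X, Finset.mem_singleton] at hε
    subst hε
    have h1 : d * n ≤ ydeg δ' := P_pow_le_pred (d * n) hs δ' hδ'
    refine Or.inl ⟨?_, ?_⟩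
    · simp only [Finsupp.add_apply, Finsupp.single_eq_same]; omega
    · rw [ydeg_add, ydeg_add]; omega
  · refine Ideal.mul_le.mpr fun r hr s hs => ?_
    obtain ⟨t, rfl⟩ := Ideal.mem_span_singleton.mp hr
    intro α hα
    rw [mul_comm _ t, mul_assoc] at hα
    obtain ⟨γ, hγ, δ, hδ, rfl⟩ := mem_support_mul hα
    obtain ⟨ε, hε, δ', hδ', rfl⟩ := mem_support_mul hδ
    rw [X_pow_eq_monomial, support_monomial_one, Finset.mem_singleton] at hε
    subst hε
    obtain ⟨hQ, _⟩ := E_le_predQe hTE hs δ' hδ'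
    refine Or.inr (Or.inl ⟨?_, ?_⟩)
    · simp only [Finsupp.add_apply, Finsupp.single_eq_same]; omega
    · rw [← add_assoc]
      exact Qe_up TE _ _ hQ
  · rw [Ideal.span_le]
    intro q hq
    obtain ⟨σ, rfl, _, _, _, _⟩ := goodGens_spec hTF hq
    intro α hα
    rw [support_monomial_one, Finset.mem_singleton] at hα
    subst hα
    exact Or.inr (Or.inr (Or.inl ⟨_, hq, le_refl _⟩))
  · intro p hp α hα
    exact Or.inr (Or.inr (Or.inr (P_pow_le_pred _ hp α hα)))

lemma degree_eq_of_mem_support {p : MvPolynomial (Fin (m + 2)) k} {N : ℕ}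
    (hp : p.IsHomogeneous N) {α} (hα : α ∈ p.support) : Finsupp.degree α = N := by
  rw [Finsupp.degree_eq_weight_one]
  exact hp (MvPolynomial.mem_support_iff.mp hα)

lemma shift_case (hcc : 1 ≤ cc) (hTE : GoodGens (d * n) TE) (hTF : GoodGens (d * n) TF)
    {α : Fin (m + 2) →₀ ℕ} (hydeg : d * n ≤ ydeg α)
    (hdeg : d * (n + 1) + cc ≤ Finsupp.degree α + 1)
    (hD : Dpred d cc n TE TF (Finsupp.single 1 1 + α)) : Dpred d cc n TE TF α := by
  have happ0 : (Finsupp.single (1 : Fin (m+2)) (1:ℕ) + α) 0 = α 0 := by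
    rw [Finsupp.add_apply, Finsupp.single_eq_of_ne' (by norm_num : (1 : Fin (m+2)) ≠ 0), zero_add]
  have happ1 : (Finsupp.single (1 : Fin (m+2)) (1:ℕ) + α) 1 = α 1 + 1 := by
    rw [Finsupp.add_apply, Finsupp.single_eq_same]; omega
  have hyd : ydeg (Finsupp.single (1 : Fin (m+2)) 1 + α) = ydeg α := by
    rw [ydeg_add, ydeg_single_one', zero_add]
  have hQe : ∀ (T : Set (MvPolynomial (Fin (m + 2)) k)), GoodGens (d * n) T →
      Qe T (Finsupp.single 1 1 + α) → Qe T α := by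
    rintro T hT ⟨σ, hσT, hσle⟩
    obtain ⟨_, hσ1, _, _⟩ := goodGens_exp_spec hT hσT
    refine ⟨σ, hσT, fun j => ?_⟩
    rcases eq_or_ne j 1 with rfl | hj
    · rw [hσ1]; exact Nat.zero_le _
    · have := hσle j
      rwa [Finsupp.add_apply, Finsupp.single_eq_of_ne' (Ne.symm hj), zero_add] at this
  rcases hD with ⟨h1, h2⟩ | ⟨h1, h2⟩ | h | h
  · rw [happ0] at h1; exact Or.inl ⟨h1, hydeg⟩
  · rw [happ1] at h1
    have hQ := hQe TE hTE h2
    rcases Nat.lt_or_ge (α 1) cc with hlt | hge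
    · -- α 1 = cc - 1
      rcases Nat.lt_or_ge (α 0) 1 with h0 | h0
      · rcases Nat.lt_or_ge (ydeg α) (d * (n + 1)) with hy | hy
        · exfalso
          have := degree_split α
          omega
        · exact Or.inr (Or.inr (Or.inr hy))
      · exact Or.inl ⟨h0, hydeg⟩
    · exact Or.inr (Or.inl ⟨hge, hQ⟩)
  · exact Or.inr (Or.inr (Or.inl (hQe TF hTF h)))
  · rw [hyd] at h; exact Or.inr (Or.inr (Or.inr h))

lemma inj_step (hcc : 1 ≤ cc) (hTE : GoodGens (d * n) TE) (hTF : GoodGens (d * n) TF)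
    (N : ℕ) (hN : d * (n + 1) + cc ≤ N + 1) (p : MvPolynomial (Fin (m + 2)) k)
    (hp : p ∈ (Pideal k m) ^ (d * n)) (hh : p.IsHomogeneous N)
    (hx : X 1 * p ∈ Bideal d cc n TE TF) : p ∈ Bideal d cc n TE TF := by
  have hps : p = ∑ α ∈ p.support, monomial α (MvPolynomial.coeff α p) := p.as_sum
  rw [hps]
  refine Submodule.sum_mem _ fun α hα => ?_
  have hcoeff : MvPolynomial.coeff (Finsupp.single 1 1 + α) (X 1 * p) =
      MvPolynomial.coeff α p := MvPolynomial.coeff_X_mul α 1 p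
  have hmem : (Finsupp.single (1 : Fin (m+2)) 1 + α) ∈ (X 1 * p).support := by
    rw [MvPolynomial.mem_support_iff, hcoeff]
    exact MvPolynomial.mem_support_iff.mp hα
  have hD := B_le_predD hTE hTF hx _ hmem
  have hydeg : d * n ≤ ydeg α := P_pow_le_pred (d * n) hp α hα
  have hdeg : Finsupp.degree α = N := degree_eq_of_mem_support hh hα
  exact monomial_mem_B_of_D hTE _ (shift_case hcc hTE hTF hydeg (by omega) hD)

lemma surj_step (hcc : 1 ≤ cc) (hTE : GoodGens (d * n) TE)
    (N : ℕ) (hN : d * (n + 1) + cc ≤ N + 1) (p : MvPolynomial (Fin (m + 2)) k)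
    (hp : p ∈ (Pideal k m) ^ (d * n)) (hh : p.IsHomogeneous N) :
    ∃ p', p' ∈ (Pideal k m) ^ (d * n) ∧ p'.IsHomogeneous (N - 1) ∧
      p - X 1 * p' ∈ Bideal d cc n TE TF := by
  classical
  set e₁ : Fin (m + 2) →₀ ℕ := Finsupp.single 1 1 with he₁
  refine ⟨∑ α ∈ p.support.filter (fun α => 1 ≤ α 1),
    monomial (α - e₁) (MvPolynomial.coeff α p), ?_, ?_, ?_⟩
  · refine Submodule.sum_mem _ fun α hα => ?_
    rw [Finset.mem_filter] at hα
    have hydeg : d * n ≤ ydeg α := P_pow_le_pred (d * n) hp α hα.1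
    have hle : e₁ ≤ α := Finsupp.single_le_iff.mpr hα.2
    have : ydeg (α - e₁) = ydeg α := by
      conv_rhs => rw [← add_tsub_cancel_of_le hle]
      rw [ydeg_add, he₁, ydeg_single_one', zero_add]
    have h1 : monomial (α - e₁) (MvPolynomial.coeff α p) =
        C (MvPolynomial.coeff α p) * monomial (α - e₁) 1 := by
      rw [C_mul_monomial, mul_one]
    rw [h1]
    exact Ideal.mul_mem_left _ _ (monomial_mem_P_pow _ _ (by omega))
  · refine Submodule.sum_mem (homogeneousSubmodule _ k (N-1)) fun α hα => ?_
    rw [Finset.mem_filter] at hα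
    have hle : e₁ ≤ α := Finsupp.single_le_iff.mpr hα.2
    have hdeg : Finsupp.degree α = N := degree_eq_of_mem_support hh hα.1
    rw [mem_homogeneousSubmodule]
    refine isHomogeneous_monomial _ ?_
    have : Finsupp.degree α = 1 + Finsupp.degree (α - e₁) := by
      conv_lhs => rw [← add_tsub_cancel_of_le hle]
      rw [degree_add, he₁, degree_single]
    omega
  · have hX1 : X (1 : Fin (m+2)) * (∑ α ∈ p.support.filter (fun α => 1 ≤ α 1),
        monomial (α - e₁) (MvPolynomial.coeff α p)) =
        ∑ α ∈ p.support.filter (fun α => 1 ≤ α 1), monomial α (MvPolynomial.coeff α p) := by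
      rw [Finset.mul_sum]
      refine Finset.sum_congr rfl fun α hα => ?_
      rw [Finset.mem_filter] at hα
      have hle : e₁ ≤ α := Finsupp.single_le_iff.mpr hα.2
      rw [X, monomial_mul, one_mul, add_tsub_cancel_of_le hle]
    rw [hX1]
    have hsum := Finset.sum_filter_add_sum_filter_not p.support (fun α => 1 ≤ α 1)
      (fun α => monomial α (MvPolynomial.coeff α p))
    have hsplit : p - ∑ α ∈ p.support.filter (fun α => 1 ≤ α 1),
        monomial α (MvPolynomial.coeff α p) =
        ∑ α ∈ p.support.filter (fun α => ¬ 1 ≤ α 1), monomial α (MvPolynomial.coeff α p) := by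
      refine sub_eq_of_eq_add' ?_
      rw [hsum]
      exact p.as_sum
    rw [hsplit]
    refine Submodule.sum_mem _ fun α hα => ?_
    rw [Finset.mem_filter] at hα
    have h1 : α 1 = 0 := by omega
    have hydeg : d * n ≤ ydeg α := P_pow_le_pred (d * n) hp α hα.1
    have hdeg : Finsupp.degree α = N := degree_eq_of_mem_support hh hα.1
    refine monomial_mem_B_of_D hTE _ ?_
    rcases Nat.lt_or_ge (α 0) 1 with h0 | h0
    · refine Or.inr (Or.inr (Or.inr ?_))
      have := degree_split α
      omega
    · exact Or.inl ⟨h0, hydeg⟩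

end BAnalysis

open Finset

variable {k R : Type} [Field k] [CommRing R] [Algebra k R]

/-- wedge with `ê = ∑ c p • e p`. -/
noncomputable def Wop (G : StdGraded k R) (c : Fin G.ngens → k)
    (h : Finset (Fin G.ngens) → R) : Finset (Fin G.ngens) → R := fun s =>
  ∑ p ∈ s, c p • ((-1 : R) ^ ((s.filter fun l => l < p).card) * h (s.erase p))

lemma neg_one_sq_pow (a : ℕ) : ((-1 : R) ^ a) * ((-1 : R) ^ a) = 1 := by
  rw [← pow_add]
  exact Even.neg_one_pow ⟨a, rfl⟩

lemma sign_lemma {r : ℕ} (s : Finset (Fin r)) {p q : Fin r} (hp : p ∈ s) (hq : q ∉ s) :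
    ((-1 : R) ^ ((s.filter fun l => l < q).card)) *
      ((-1 : R) ^ (((insert q s).filter fun l => l < p).card)) =
    - (((-1 : R) ^ ((s.filter fun l => l < p).card)) *
      ((-1 : R) ^ (((s.erase p).filter fun l => l < q).card))) := by
  classical
  have hpq : p ≠ q := fun h => hq (h ▸ hp)
  have h2 : (s.erase p).filter (fun l => l < q) = (s.filter fun l => l < q).erase p :=
    Finset.filter_erase (p := fun l => l < q) p s
  rcases lt_or_gt_of_ne hpq with hlt | hgt
  · -- p < q
    have h1 : (insert q s).filter (fun l => l < p) = s.filter (fun l => l < p) := by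
      rw [Finset.filter_insert, if_neg (by exact fun h => absurd (h.trans hlt) (lt_irrefl q))]
    have hpmem : p ∈ s.filter (fun l => l < q) := Finset.mem_filter.mpr ⟨hp, hlt⟩
    have hcard : ((s.filter fun l => l < q).erase p).card + 1 =
        (s.filter fun l => l < q).card := by
      rw [Finset.card_erase_of_mem hpmem]
      have : 0 < (s.filter fun l => l < q).card := Finset.card_pos.mpr ⟨p, hpmem⟩
      omega
    rw [h1, h2, ← hcard, pow_succ]
    ring
  · -- q < p
    have h1 : (insert q s).filter (fun l => l < p) = insert q (s.filter fun l => l < p) := by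
      rw [Finset.filter_insert, if_pos hgt]
    have h2' : p ∉ s.filter (fun l => l < q) :=
      fun h => absurd ((Finset.mem_filter.mp h).2.trans hgt) (lt_irrefl p)
    have hqf : q ∉ s.filter (fun l => l < p) := fun h => hq (Finset.mem_filter.mp h).1
    rw [h1, h2, Finset.erase_eq_of_notMem h2', Finset.card_insert_of_notMem hqf, pow_succ]
    ring

lemma cartan (G : StdGraded k R) (c : Fin G.ngens → k) (h : Finset (Fin G.ngens) → R)
    (s : Finset (Fin G.ngens)) :
    kosD G (Wop G c h) s + Wop G c (kosD G h) s = (∑ p, c p • G.gen p) * h s := by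
  classical
  have step1 : kosD G (Wop G c h) s =
      (∑ q ∈ sᶜ, c q • (G.gen q * h s)) +
      ∑ q ∈ sᶜ, ∑ p ∈ s, c p •
        (((-1:R) ^ ((s.filter fun l => l < q).card) *
         (-1:R) ^ (((insert q s).filter fun l => l < p).card)) *
         (G.gen q * h (insert q (s.erase p)))) := by
    rw [kosD, ← Finset.sum_add_distrib]
    refine Finset.sum_congr rfl fun q hq => ?_
    have hqs : q ∉ s := Finset.mem_compl.mp hq
    rw [Wop, Finset.sum_insert hqs, Finset.erase_insert hqs, mul_add]
    congr 1
    · rw [mul_smul_comm]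
      congr 1
      have hfilter : (insert q s).filter (fun l => l < q) = s.filter (fun l => l < q) := by
        rw [Finset.filter_insert, if_neg (lt_irrefl q)]
      rw [hfilter]
      have h1 : (-1:R) ^ ((s.filter fun l => l < q).card) * G.gen q *
          ((-1:R) ^ ((s.filter fun l => l < q).card) * h s) =
          ((-1:R) ^ ((s.filter fun l => l < q).card) *
           (-1:R) ^ ((s.filter fun l => l < q).card)) * (G.gen q * h s) := by ring
      rw [h1, neg_one_sq_pow, one_mul]
    · rw [Finset.mul_sum]
      refine Finset.sum_congr rfl fun p hp => ?_
      have hpq : p ≠ q := fun hpq' => hqs (hpq' ▸ hp)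
      rw [Finset.erase_insert_of_ne (Ne.symm hpq), mul_smul_comm]
      congr 1
      ring
  have step2 : Wop G c (kosD G h) s =
      (∑ p ∈ s, c p • (G.gen p * h s)) +
      ∑ p ∈ s, ∑ q ∈ sᶜ, c p •
        (((-1:R) ^ ((s.filter fun l => l < p).card) *
         (-1:R) ^ (((s.erase p).filter fun l => l < q).card)) *
         (G.gen q * h (insert q (s.erase p)))) := by
    rw [Wop, ← Finset.sum_add_distrib]
    refine Finset.sum_congr rfl fun p hp => ?_
    have hps : p ∉ sᶜ := by rw [Finset.mem_compl]; exact fun hc => hc hp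
    rw [kosD, Finset.compl_erase, Finset.sum_insert hps]
    rw [mul_add, smul_add]
    congr 1
    · congr 1
      have hfil : (s.erase p).filter (fun l => l < p) = s.filter (fun l => l < p) := by
        rw [Finset.filter_erase (p := fun l => l < p) p s]
        exact Finset.erase_eq_of_notMem (fun hm => absurd (Finset.mem_filter.mp hm).2
          (lt_irrefl p))
      rw [hfil, Finset.insert_erase hp]
      have h1 : (-1:R) ^ ((s.filter fun l => l < p).card) *
          ((-1:R) ^ ((s.filter fun l => l < p).card) * G.gen p * h s) =
          ((-1:R) ^ ((s.filter fun l => l < p).card) *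
           (-1:R) ^ ((s.filter fun l => l < p).card)) * (G.gen p * h s) := by ring
      rw [h1, neg_one_sq_pow, one_mul]
    · rw [Finset.mul_sum, Finset.smul_sum]
      refine Finset.sum_congr rfl fun q hq => ?_
      congr 1
      ring
  rw [step1, step2]
  have hC : (∑ q ∈ sᶜ, ∑ p ∈ s, c p •
        (((-1:R) ^ ((s.filter fun l => l < q).card) *
         (-1:R) ^ (((insert q s).filter fun l => l < p).card)) *
         (G.gen q * h (insert q (s.erase p))))) +
      (∑ p ∈ s, ∑ q ∈ sᶜ, c p •
        (((-1:R) ^ ((s.filter fun l => l < p).card) *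
         (-1:R) ^ (((s.erase p).filter fun l => l < q).card)) *
         (G.gen q * h (insert q (s.erase p))))) = 0 := by
    rw [Finset.sum_comm (s := sᶜ) (t := s)]
    rw [← Finset.sum_add_distrib]
    refine Finset.sum_eq_zero fun p hp => ?_
    rw [← Finset.sum_add_distrib]
    refine Finset.sum_eq_zero fun q hq => ?_
    rw [← smul_add, ← add_mul, sign_lemma s hp (Finset.mem_compl.mp hq), neg_add_cancel,
      zero_mul, smul_zero]
  have hA : (∑ q ∈ sᶜ, c q • (G.gen q * h s)) + (∑ p ∈ s, c p • (G.gen p * h s)) =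
      (∑ p, c p • G.gen p) * h s := by
    rw [add_comm, Finset.sum_add_sum_compl s (fun p => c p • (G.gen p * h s)),
      Finset.sum_mul]
    exact Finset.sum_congr rfl fun p _ => (smul_mul_assoc (c p) (G.gen p) (h s)).symm
  rw [add_add_add_comm, hC, add_zero, hA]

lemma kosD_sub (G : StdGraded k R) (f g : Finset (Fin G.ngens) → R) (t) :
    kosD G (fun u => f u - g u) t = kosD G f t - kosD G g t := by
  rw [kosD, kosD, kosD, ← Finset.sum_sub_distrib]
  exact Finset.sum_congr rfl fun q _ => by ring

lemma kosD_mul (G : StdGraded k R) (l : R) (f : Finset (Fin G.ngens) → R) (t) :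
    kosD G (fun u => l * f u) t = l * kosD G f t := by
  rw [kosD, kosD, Finset.mul_sum]
  exact Finset.sum_congr rfl fun q _ => by ring

lemma kosD_mem (G : StdGraded k R) (B : Ideal R) (f : Finset (Fin G.ngens) → R) (t)
    (hf : ∀ u, f u ∈ B) : kosD G f t ∈ B := by
  rw [kosD]
  exact Submodule.sum_mem _ fun q _ => Ideal.mul_mem_left _ _ (hf _)

lemma pm_mem_submodule {V : Submodule k R} {x : R} (hx : x ∈ V) (e : ℕ) :
    (-1 : R) ^ e * x ∈ V := by
  rcases Nat.even_or_odd e with he | he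
  · rw [he.neg_one_pow, one_mul]; exact hx
  · rw [he.neg_one_pow, neg_one_mul]; exact V.neg_mem hx

theorem tor_le (G : StdGraded k R) (A B : Ideal R) (e0 : ℤ)
    (l : R) (c : Fin G.ngens → k) (hc : (∑ p, c p • G.gen p) = l)
    (hmul : ∀ (t : ℤ) (u w : R), u ∈ G.deg 1 → w ∈ G.deg t → u * w ∈ G.deg (t + 1))
    (hsurj : ∀ t : ℤ, e0 < t → ∀ a, a ∈ A → a ∈ G.deg t →
      ∃ a', a' ∈ A ∧ a' ∈ G.deg (t - 1) ∧ a - l * a' ∈ B)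
    (hinj : ∀ t : ℤ, e0 < t → ∀ a, a ∈ A → a ∈ G.deg t → l * a ∈ B → a ∈ B)
    (i : ℕ) (j : ℤ) (htor : TorNonzero G A B i j) : j - i ≤ e0 := by
  by_contra hgt
  push_neg at hgt
  obtain ⟨f, hfs, hfc, hfnb⟩ := htor
  classical
  have hch : ∀ s : Finset (Fin G.ngens), s.card = i →
      ∃ a', a' ∈ A ∧ a' ∈ G.deg (j - i - 1) ∧ f s - l * a' ∈ B := by
    intro s hs
    have h := hfs s
    rw [if_pos hs] at h
    obtain ⟨a', h1, h2, h3⟩ := hsurj (j - i) hgt (f s) h.1 h.2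
    exact ⟨a', h1, h2, h3⟩
  set f' : Finset (Fin G.ngens) → R := fun s =>
    if hs : s.card = i then (hch s hs).choose else 0 with hf'
  have hf'A : ∀ s (hs : s.card = i),
      f' s ∈ A ∧ f' s ∈ G.deg (j - i - 1) ∧ f s - l * f' s ∈ B := by
    intro s hs
    simp only [hf', dif_pos hs]
    exact (hch s hs).choose_spec
  have hf'0 : ∀ s, s.card ≠ i → f' s = 0 := fun s hs => by simp only [hf', dif_neg hs]
  have hfB : ∀ s, f s - l * f' s ∈ B := by
    intro s
    by_cases hs : s.card = i
    · exact (hf'A s hs).2.2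
    · have h := hfs s; rw [if_neg hs] at h
      rw [h, hf'0 s hs, mul_zero, sub_zero]; exact B.zero_mem
  have hkos : ∀ t, kosD G f' t ∈ B := by
    intro t
    by_cases ht : t.card + 1 = i
    · have hzA : kosD G f' t ∈ A := by
        rw [kosD]; refine Submodule.sum_mem _ fun q hq => ?_
        have hcard : (insert q t).card = i := by
          rw [Finset.card_insert_of_notMem (Finset.mem_compl.mp hq)]; exact ht
        exact Ideal.mul_mem_left _ _ ((hf'A _ hcard).1)
      have hzdeg : kosD G f' t ∈ G.deg (j - i) := by
        rw [kosD]; refine Submodule.sum_mem _ fun q hq => ?_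
        have hcard : (insert q t).card = i := by
          rw [Finset.card_insert_of_notMem (Finset.mem_compl.mp hq)]; exact ht
        have h1 : G.gen q * f' (insert q t) ∈ G.deg ((j - (i:ℤ) - 1) + 1) :=
          hmul _ _ _ (G.gen_mem q) (hf'A _ hcard).2.1
        have h2 : (j - (i:ℤ) - 1) + 1 = j - i := by ring
        rw [h2] at h1
        rw [mul_assoc]
        exact pm_mem_submodule h1 _
      have hlz : l * kosD G f' t ∈ B := by
        rw [← kosD_mul]
        have heq : (fun u => l * f' u) = fun u => f u - (f u - l * f' u) := by
          funext u; ring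
        rw [heq, kosD_sub]
        exact Submodule.sub_mem _ (hfc t) (kosD_mem G B _ t hfB)
      exact hinj (j - i) hgt _ hzA hzdeg hlz
    · rw [kosD]
      refine Submodule.sum_mem _ fun q hq => ?_
      have h0 : f' (insert q t) = 0 := hf'0 _ (by
        rw [Finset.card_insert_of_notMem (Finset.mem_compl.mp hq)]; exact ht)
      rw [h0, mul_zero]; exact B.zero_mem
  refine hfnb ⟨Wop G c f', ?_, ?_⟩
  · intro s
    by_cases hs : s.card = i + 1
    · rw [if_pos hs]
      constructor
      · rw [Wop]; refine Submodule.sum_mem _ fun p hp => ?_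
        have hcard : (s.erase p).card = i := by
          rw [Finset.card_erase_of_mem hp, hs]; omega
        exact Submodule.smul_of_tower_mem _ _ (Ideal.mul_mem_left _ _ (hf'A _ hcard).1)
      · rw [Wop]; refine Submodule.sum_mem _ fun p hp => ?_
        have hcard : (s.erase p).card = i := by
          rw [Finset.card_erase_of_mem hp, hs]; omega
        exact Submodule.smul_mem _ _ (pm_mem_submodule (hf'A _ hcard).2.1 _)
    · rw [if_neg hs, Wop]
      refine Finset.sum_eq_zero fun p hp => ?_
      have hne : (s.erase p).card ≠ i := by
        have h1 : 0 < s.card := Finset.card_pos.mpr ⟨p, hp⟩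
        rw [Finset.card_erase_of_mem hp]
        omega
      rw [hf'0 _ hne, mul_zero, smul_zero]
  · intro s
    have hkosW : kosD G (Wop G c f') s = l * f' s - Wop G c (kosD G f') s := by
      have h := cartan G c f' s
      rw [hc] at h
      exact eq_sub_of_add_eq h
    rw [hkosW]
    have h3 : f s - (l * f' s - Wop G c (kosD G f') s) =
        (f s - l * f' s) + Wop G c (kosD G f') s := by ring
    rw [h3]
    refine Submodule.add_mem _ (hfB s) ?_
    rw [Wop]
    refine Submodule.sum_mem _ fun p hp => ?_
    exact Submodule.smul_of_tower_mem _ _ (Ideal.mul_mem_left _ _ (hkos _))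

theorem socle_tor (G : StdGraded k R) (A B : Ideal R) (el : ℤ) (v : R)
    (hvA : v ∈ A) (hvd : v ∈ G.deg el) (hvm : ∀ p : Fin G.ngens, G.gen p * v ∈ B)
    (hvB : v ∉ B) : TorNonzero G A B G.ngens (el + G.ngens) := by
  classical
  refine ⟨fun s => if s = Finset.univ then v else 0, ?_, ?_, ?_⟩
  · intro s
    dsimp only
    by_cases hs : s.card = G.ngens
    · rw [if_pos hs]
      have hsu : s = Finset.univ := Finset.eq_univ_of_card s (by
        rw [hs, Fintype.card_fin])
      rw [if_pos hsu]
      refine ⟨hvA, ?_⟩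
      have h : el + (G.ngens:ℤ) - (G.ngens:ℤ) = el := by ring
      rw [h]; exact hvd
    · rw [if_neg hs]
      rw [if_neg (fun hsu => hs (by rw [hsu, Finset.card_univ, Fintype.card_fin]))]
  · intro t
    rw [kosD]
    refine Submodule.sum_mem _ fun q hq => ?_
    by_cases hins : insert q t = Finset.univ
    · rw [if_pos hins, mul_assoc]
      exact Ideal.mul_mem_left _ _ (hvm q)
    · rw [if_neg hins, mul_zero]; exact B.zero_mem
  · rintro ⟨g, hg1, hg2⟩
    have hg0 : ∀ s, g s = 0 := by
      intro s
      have h := hg1 s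
      rw [if_neg (by
        have hcard : s.card ≤ G.ngens := by
          have := Finset.card_le_univ s
          simp only [Finset.card_univ, Fintype.card_fin] at this
          exact this
        omega)] at h
      exact h
    have h := hg2 Finset.univ
    dsimp only at h
    rw [if_pos rfl] at h
    have hk : kosD G g Finset.univ = 0 := by
      rw [kosD]; exact Finset.sum_eq_zero fun q hq => by rw [hg0, mul_zero]
    rw [hk, sub_zero] at h
    exact hvB h

open MvPolynomial Finset

section Final
variable {k : Type} [Field k] {m : ℕ}

lemma degree_one_single {α : Fin (m + 2) →₀ ℕ} (h : Finsupp.degree α = 1) :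
    ∃ i0 : Fin (m + 2), α = Finsupp.single i0 1 := by
  have hne : α ≠ 0 := by
    intro h0
    rw [h0, map_zero] at h
    omega
  obtain ⟨i0, hi0⟩ := Finsupp.support_nonempty_iff.mpr hne
  have h1 : α i0 ≠ 0 := Finsupp.mem_support_iff.mp hi0
  have hsum : α i0 + ∑ j ∈ α.support.erase i0, α j = Finsupp.degree α :=
    Finset.add_sum_erase _ _ hi0
  have hα0 : α i0 = 1 := by omega
  have hrest : ∑ j ∈ α.support.erase i0, α j = 0 := by omega
  refine ⟨i0, Finsupp.ext fun j => ?_⟩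
  rcases eq_or_ne j i0 with rfl | hj
  · rw [hα0, Finsupp.single_eq_same]
  · rw [Finsupp.single_eq_of_ne' (Ne.symm hj)]
    by_contra hc
    have hjs : j ∈ α.support.erase i0 :=
      Finset.mem_erase.mpr ⟨hj, Finsupp.mem_support_iff.mpr hc⟩
    have := Finset.sum_eq_zero_iff.mp hrest j hjs
    exact hc this

variable {d cc n : ℕ} {TE TF : Set (MvPolynomial (Fin (m + 2)) k)}

/-- a monomial witness in `E·P^{d-1} \ F`. -/
lemma exists_witness_exp (hTE : GoodGens (d * n) TE)
    (hEF : ¬ Ideal.span TE * (Pideal k m) ^ (d - 1) ≤ Ideal.span TF) :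
    ∃ α : Fin (m + 2) →₀ ℕ, Qe TE α ∧ d * n + (d - 1) ≤ ydeg α ∧
      monomial α (1 : k) ∉ Ideal.span TF := by
  classical
  obtain ⟨z, hz, hzF⟩ := SetLike.not_le_iff_exists.mp hEF
  have hup : ∀ γ δ : Fin (m + 2) →₀ ℕ,
      (Qe TE δ ∧ d * n + (d-1) ≤ ydeg δ) → (Qe TE (γ + δ) ∧ d * n + (d-1) ≤ ydeg (γ + δ)) :=
    fun γ δ h => ⟨Qe_up TE γ δ h.1, by rw [ydeg_add]; omega⟩
  have hle : Ideal.span TE * (Pideal k m) ^ (d - 1) ≤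
      predIdeal (fun α => Qe TE α ∧ d * n + (d-1) ≤ ydeg α) hup := by
    refine Ideal.mul_le.mpr fun r hr s hs => ?_
    intro α hα
    obtain ⟨γ, hγ, δ, hδ, rfl⟩ := mem_support_mul hα
    obtain ⟨hQ, hyd⟩ := E_le_predQe hTE hr γ hγ
    have hyd2 : d - 1 ≤ ydeg δ := P_pow_le_pred (d-1) hs δ hδ
    constructor
    · obtain ⟨σ, h1, h2⟩ := hQ
      exact ⟨σ, h1, le_trans h2 (le_add_of_nonneg_right zero_le)⟩
    · rw [ydeg_add]; omega
  have hmono : ∃ α ∈ z.support, monomial α (1:k) ∉ Ideal.span TF := by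
    by_contra hc
    push_neg at hc
    apply hzF
    have hzs : z = ∑ α ∈ z.support, monomial α (MvPolynomial.coeff α z) := z.as_sum
    rw [hzs]
    refine Submodule.sum_mem _ fun α hα => ?_
    have : monomial α (MvPolynomial.coeff α z) = C (MvPolynomial.coeff α z) * monomial α 1 := by
      rw [C_mul_monomial, mul_one]
    rw [this]
    exact Ideal.mul_mem_left _ _ (hc α hα)
  obtain ⟨α, hα, hαF⟩ := hmono
  obtain ⟨hQ, hyd⟩ := hle hz α hα
  exact ⟨α, hQ, hyd, hαF⟩

end Final

section Final2
variable {k : Type} [Field k] {m : ℕ} {d cc n : ℕ}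
variable {TE TF : Set (MvPolynomial (Fin (m + 2)) k)}

lemma witness (hd : 1 ≤ d) (hcc : 1 ≤ cc) (hTE : GoodGens (d * n) TE)
    (hTF : GoodGens (d * n) TF)
    (hEF : ¬ Ideal.span TE * (Pideal k m) ^ (d - 1) ≤ Ideal.span TF) :
    ∃ v : MvPolynomial (Fin (m + 2)) k, v ∈ (Pideal k m) ^ (d * n) ∧
      v.IsHomogeneous (d * (n + 1) + cc - 2) ∧
      (∀ i0 : Fin (m + 2), X i0 * v ∈ Bideal d cc n TE TF) ∧
      v ∉ Bideal d cc n TE TF := by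
  classical
  have hdist : d * (n + 1) = d * n + d := by ring
  obtain ⟨α, hQ, hydα, hαF⟩ := exists_witness_exp hTE hEF
  obtain ⟨σ, hσTE, hσle⟩ := hQ
  obtain ⟨hσ0, hσ1, hσy, hσd⟩ := goodGens_exp_spec hTE hσTE
  -- the y-part of α
  set δ : Fin (m + 2) →₀ ℕ := ya (fun i => α i.succ.succ) with hδ
  have hδ0 : δ 0 = 0 := ya_apply_zero _
  have hδ1 : δ 1 = 0 := ya_apply_one _
  have hδs : ∀ i : Fin m, δ i.succ.succ = α i.succ.succ := fun i => ya_apply_succ _ i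
  have hδle : δ ≤ α := by
    intro j
    rcases fin_two_cases j with rfl | rfl | ⟨i, rfl⟩
    · rw [hδ0]; exact Nat.zero_le _
    · rw [hδ1]; exact Nat.zero_le _
    · rw [hδs]
  have hσδ : σ ≤ δ := by
    intro j
    rcases fin_two_cases j with rfl | rfl | ⟨i, rfl⟩
    · rw [hσ0]; exact Nat.zero_le _
    · rw [hσ1]; exact Nat.zero_le _
    · rw [hδs]; exact hσle _
  have hδdeg : Finsupp.degree δ = ydeg α := by
    rw [hδ, degree_ya]; rfl
  obtain ⟨ρ, hρ1, hρ2, hρ3⟩ := finsupp_exists_between δ (d * n + (d - 1)) σ hσδ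
    (by omega) (by omega)
  have hρ0 : ρ 0 = 0 := Nat.le_zero.mp (hδ0 ▸ hρ2 0)
  have hρ1' : ρ 1 = 0 := Nat.le_zero.mp (hδ1 ▸ hρ2 1)
  have hρy : ydeg ρ = d * n + (d - 1) := by
    have := degree_split ρ
    omega
  set w : Fin (m + 2) →₀ ℕ := Finsupp.single 1 (cc - 1) + ρ with hw
  have hw0 : w 0 = 0 := by
    rw [hw, Finsupp.add_apply, Finsupp.single_eq_of_ne' (by norm_num : (1 : Fin (m+2)) ≠ 0)]
    omega
  have hw1 : w 1 = cc - 1 := by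
    rw [hw, Finsupp.add_apply, Finsupp.single_eq_same]
    omega
  have hwy : ydeg w = d * n + (d - 1) := by
    rw [hw, ydeg_add, ydeg_single_one', zero_add, hρy]
  have hwd : Finsupp.degree w = d * (n + 1) + cc - 2 := by
    rw [hw, degree_add, degree_single, hρ3]
    omega
  have hws : ∀ i : Fin m, w i.succ.succ = ρ i.succ.succ := by
    intro i
    rw [hw, Finsupp.add_apply, Finsupp.single_eq_of_ne' (Ne.symm (succ_succ_ne_one i)), zero_add]
  refine ⟨monomial w 1, ?_, ?_, ?_, ?_⟩
  · exact monomial_mem_P_pow _ _ (by omega)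
  · exact isHomogeneous_monomial _ hwd
  · intro i0
    have hXw : (X i0 : MvPolynomial (Fin (m+2)) k) * monomial w 1 =
        monomial (Finsupp.single i0 1 + w) 1 := by
      rw [X, monomial_mul, one_mul]
    rw [hXw]
    refine monomial_mem_B_of_D hTE _ ?_
    rcases fin_two_cases i0 with rfl | rfl | ⟨i, rfl⟩
    · refine Or.inl ⟨?_, ?_⟩
      · rw [Finsupp.add_apply, Finsupp.single_eq_same]; omega
      · rw [ydeg_add, ydeg_single_zero, zero_add, hwy]; omega
    · refine Or.inr (Or.inl ⟨?_, ?_⟩)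
      · rw [Finsupp.add_apply, Finsupp.single_eq_same, hw1]; omega
      · refine ⟨σ, hσTE, ?_⟩
        calc σ ≤ ρ := hρ1
          _ ≤ w := by rw [hw]; exact le_add_of_nonneg_left zero_le
          _ ≤ Finsupp.single 1 1 + w := le_add_of_nonneg_left zero_le
    · refine Or.inr (Or.inr (Or.inr ?_))
      rw [ydeg_add, ydeg_single_succ, hwy]
      omega
  · intro hB
    have hmem : w ∈ (monomial w (1:k)).support := by
      rw [support_monomial_one]
      exact Finset.mem_singleton_self w
    have hD := B_le_predD hTE hTF hB w hmem
    rcases hD with ⟨h1, _⟩ | ⟨h1, _⟩ | h | h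
    · rw [hw0] at h1; omega
    · rw [hw1] at h1; omega
    · obtain ⟨θ, hθTF, hθle⟩ := h
      obtain ⟨hθ0, hθ1, hθy, hθd⟩ := goodGens_exp_spec hTF hθTF
      have hθα : θ ≤ α := by
        intro j
        rcases fin_two_cases j with rfl | rfl | ⟨i, rfl⟩
        · rw [hθ0]; exact Nat.zero_le _
        · rw [hθ1]; exact Nat.zero_le _
        · calc θ i.succ.succ ≤ w i.succ.succ := hθle _
            _ = ρ i.succ.succ := hws i
            _ ≤ δ i.succ.succ := hρ2 _
            _ = α i.succ.succ := hδs i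
      apply hαF
      have heq : monomial α (1:k) = monomial θ 1 * monomial (α - θ) 1 := by
        rw [monomial_mul, one_mul, add_tsub_cancel_of_le hθα]
      rw [heq]
      exact Ideal.mul_mem_right _ _ (Ideal.subset_span hθTF)
    · rw [hwy] at h; omega

lemma lin_mul_mem {q v : MvPolynomial (Fin (m + 2)) k} (hq : q.IsHomogeneous 1)
    {B : Ideal (MvPolynomial (Fin (m + 2)) k)} (hX : ∀ i0 : Fin (m + 2), X i0 * v ∈ B) :
    q * v ∈ B := by
  classical
  have hqs : q = ∑ α ∈ q.support, monomial α (MvPolynomial.coeff α q) := q.as_sum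
  rw [hqs, Finset.sum_mul]
  refine Submodule.sum_mem _ fun α hα => ?_
  obtain ⟨i0, rfl⟩ := degree_one_single (degree_eq_of_mem_support hq hα)
  have heq : monomial (Finsupp.single i0 1) (MvPolynomial.coeff (Finsupp.single i0 1) q) =
      C (MvPolynomial.coeff (Finsupp.single i0 1) q) * X i0 := by
    rw [X, C_mul_monomial, mul_one]
  rw [heq, mul_assoc]
  exact Ideal.mul_mem_left _ _ (hX i0)

end Final2


open MvPolynomial in
/-- In `S = k[x₁, x₂, y₁, …, y_m]` (here `x₁ = X 0`, `x₂ = X 1`, `y_i = X (i+2)`), with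
`P = (y₁, …, y_m)`, `c ≥ 1`, and ideals `E`, `F` generated by monomials of degree `d·n`
in the `y`'s such that `E·P^{d-1} ⊄ F`, one has
`reg P^{dn}/(x₁P^{dn}, x₂^c E, F, P^{d(n+1)}) = d(n+1) + c - 2`.
(`G` is the standard grading of `S`.) -/
theorem stmt6 (m d : ℕ) (hd : 1 ≤ d) (cc : ℕ) (hcc : 1 ≤ cc) (n : ℕ)
    (P : Ideal (MvPolynomial (Fin (m + 2)) k))
    (hP : P = Ideal.span (Set.range fun i : Fin m =>
      (X i.succ.succ : MvPolynomial (Fin (m + 2)) k)))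
    (E F : Ideal (MvPolynomial (Fin (m + 2)) k))
    (hE : ∃ TE : Set (MvPolynomial (Fin (m + 2)) k),
      (∀ q ∈ TE, ∃ a : Fin m → ℕ, (∑ i, a i) = d * n ∧ q = ∏ i, X i.succ.succ ^ a i) ∧
      E = Ideal.span TE)
    (hF : ∃ TF : Set (MvPolynomial (Fin (m + 2)) k),
      (∀ q ∈ TF, ∃ a : Fin m → ℕ, (∑ i, a i) = d * n ∧ q = ∏ i, X i.succ.succ ^ a i) ∧
      F = Ideal.span TF)
    (hEF : ¬ E * P ^ (d - 1) ≤ F)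
    (G : StdGraded k (MvPolynomial (Fin (m + 2)) k))
    (hdeg : ∀ j : ℤ, G.deg j =
      if 0 ≤ j then homogeneousSubmodule (Fin (m + 2)) k j.toNat else ⊥) :
    reg G (P ^ (d * n))
        (Ideal.span {X (0 : Fin (m + 2))} * P ^ (d * n) ⊔
          Ideal.span {X (1 : Fin (m + 2)) ^ cc} * E ⊔ F ⊔ P ^ (d * (n + 1))) =
      (d : ℤ) * (n + 1) + cc - 2 := by
  classical
  obtain ⟨TE, hTE, rfl⟩ := hE
  obtain ⟨TF, hTF, rfl⟩ := hF
  subst hP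
  have hTE' : GoodGens (d * n) TE := hTE
  have hTF' : GoodGens (d * n) TF := hTF
  set A : Ideal (MvPolynomial (Fin (m + 2)) k) := (Pideal k m) ^ (d * n) with hA
  set B : Ideal (MvPolynomial (Fin (m + 2)) k) := Bideal d cc n TE TF with hB
  set e0 : ℤ := (d : ℤ) * (n + 1) + cc - 2 with he0
  have hcast : ((d * (n + 1) : ℕ) : ℤ) = (d : ℤ) * ((n : ℤ) + 1) := by push_cast; ring
  have hpos : 1 ≤ d * (n + 1) := Nat.mul_pos hd (Nat.succ_pos n)
  have he0' : e0 = ((d * (n + 1) : ℕ) : ℤ) + cc - 2 := by rw [he0, hcast]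
  have he0nat : e0.toNat = d * (n + 1) + cc - 2 ∧ 0 ≤ e0 := by
    constructor
    · rw [he0']; omega
    · rw [he0']; omega
  have hdist : d * (n + 1) = d * n + d := by ring
  -- the goal is about A and B
  show reg G A B = e0
  -- degree-1 membership of the variables
  have hX1deg : (X (1 : Fin (m + 2)) : MvPolynomial (Fin (m + 2)) k) ∈ G.deg 1 := by
    rw [hdeg 1, if_pos (by norm_num : (0:ℤ) ≤ 1)]
    exact (mem_homogeneousSubmodule _ _).mpr (isHomogeneous_X _ _)
  obtain ⟨c, hc⟩ := (Submodule.mem_span_range_iff_exists_fun k).mp (G.gen_span ▸ hX1deg)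
  -- multiplication rule for degrees
  have hmul : ∀ (t : ℤ) (u w : MvPolynomial (Fin (m + 2)) k), u ∈ G.deg 1 → w ∈ G.deg t → u * w ∈ G.deg (t + 1) := by
    intro t u w hu hw
    rw [hdeg 1, if_pos (by norm_num : (0:ℤ) ≤ 1)] at hu
    rw [hdeg t] at hw
    rw [hdeg (t + 1)]
    by_cases ht : 0 ≤ t
    · rw [if_pos ht] at hw
      rw [if_pos (by omega)]
      have h1 := (mem_homogeneousSubmodule _ _).mp hu
      have h2 := (mem_homogeneousSubmodule _ _).mp hw
      refine (mem_homogeneousSubmodule _ _).mpr ?_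
      have h3 := h1.mul h2
      have h4 : (1 : ℤ).toNat + t.toNat = (t + 1).toNat := by omega
      rwa [h4] at h3
    · rw [if_neg ht] at hw
      have hw0 : w = 0 := (Submodule.mem_bot k).mp hw
      rw [hw0, mul_zero]
      exact Submodule.zero_mem _
  -- surjectivity of multiplication by X 1 in high degrees
  have hsurj : ∀ t : ℤ, e0 < t → ∀ a, a ∈ A → a ∈ G.deg t →
      ∃ a', a' ∈ A ∧ a' ∈ G.deg (t - 1) ∧ a - X (1 : Fin (m+2)) * a' ∈ B := by
    intro t ht a ha hadeg
    have ht0 : 0 ≤ t := by omega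
    set N := t.toNat with hN
    have hN1 : d * (n + 1) + cc ≤ N + 1 := by
      have h5 : e0 + 1 ≤ t := by omega
      rw [he0'] at h5
      omega
    rw [hdeg t, if_pos ht0] at hadeg
    obtain ⟨p', hp1, hp2, hp3⟩ := surj_step hcc hTE' N hN1 a ha
      ((mem_homogeneousSubmodule _ _).mp hadeg)
    refine ⟨p', hp1, ?_, hp3⟩
    rw [hdeg (t - 1), if_pos (by omega)]
    have hNt : (t - 1).toNat = N - 1 := by omega
    rw [hNt]
    exact (mem_homogeneousSubmodule _ _).mpr hp2
  -- injectivity of multiplication by X 1 in high degrees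
  have hinj : ∀ t : ℤ, e0 < t → ∀ a, a ∈ A → a ∈ G.deg t →
      X (1 : Fin (m+2)) * a ∈ B → a ∈ B := by
    intro t ht a ha hadeg hXa
    have ht0 : 0 ≤ t := by omega
    set N := t.toNat with hN
    have hN1 : d * (n + 1) + cc ≤ N + 1 := by
      have h5 : e0 + 1 ≤ t := by omega
      rw [he0'] at h5
      omega
    rw [hdeg t, if_pos ht0] at hadeg
    exact inj_step hcc hTE' hTF' N hN1 a ha ((mem_homogeneousSubmodule _ _).mp hadeg) hXa
  -- upper bound
  have hub : ∀ (i : ℕ) (j : ℤ), TorNonzero G A B i j → j - i ≤ e0 :=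
    fun i j ht => tor_le G A B e0 (X 1) c hc hmul hsurj hinj i j ht
  -- the socle witness
  obtain ⟨v, hvA, hvh, hvX, hvB⟩ := witness hd hcc hTE' hTF' hEF
  have hvdeg : v ∈ G.deg e0 := by
    rw [hdeg e0, if_pos he0nat.2, he0nat.1]
    exact (mem_homogeneousSubmodule _ _).mpr hvh
  have hvm : ∀ p : Fin G.ngens, G.gen p * v ∈ B := by
    intro p
    have hg : G.gen p ∈ G.deg 1 := G.gen_mem p
    rw [hdeg 1, if_pos (by norm_num : (0:ℤ) ≤ 1)] at hg
    exact lin_mul_mem ((mem_homogeneousSubmodule _ _).mp hg) hvX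
  have htor : TorNonzero G A B G.ngens (e0 + G.ngens) :=
    socle_tor G A B e0 v hvA hvdeg hvm hvB
  -- conclude
  rw [reg]
  have hmem : e0 ∈ {e : ℤ | ∃ (i : ℕ) (j : ℤ), e = j - (i : ℤ) ∧ TorNonzero G A B i j} :=
    ⟨G.ngens, e0 + G.ngens, by ring, htor⟩
  have hubs : ∀ x ∈ {e : ℤ | ∃ (i : ℕ) (j : ℤ), e = j - (i : ℤ) ∧ TorNonzero G A B i j},
      x ≤ e0 := by
    rintro x ⟨i, j, rfl, ht⟩
    exact hub i j ht
  exact le_antisymm (csSup_le ⟨e0, hmem⟩ hubs) (le_csSup ⟨e0, hubs⟩ hmem)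
end
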